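/- arXiv:1509.03712 — 13 statements merged into one kernel-verified Lean document; each statement's English description precedes it below -/
import Mathlib

section
/- For every natural number k and every language L over a finite alphabet Σ, if L is recognized by a deterministic finite automaton with k-bit prefix advice, then L is recognized by a deterministic finite automaton with at most one inkdot of advice. -/
/-- The marked word: the i-th symbol of `w` becomes `(w_i, true)` if `i ∈ S`,
and `(w_i, false)` otherwise. -/
def markWord {α : Type*} (w : List α) (S : Finset ℕ) : List (α × Bool) :=
  w.zipIdx.map (fun p => (p.1, decide (p.2 ∈ S)))

/-- `L` is recognized by a deterministic finite automaton with at most `a n`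
inkdots of advice on inputs of length `n`. -/
def RecognizedWithInkdots {α : Type*} (L : Set (List α)) (a : ℕ → ℕ) : Prop :=
  ∃ (σ : Type) (_ : Fintype σ) (M : DFA (α × Bool) σ) (h : ℕ → Finset ℕ),
    (∀ n, ∀ i ∈ h n, i < n) ∧
    (∀ n, (h n).card ≤ a n) ∧
    (∀ w : List α, w ∈ L ↔ markWord w (h w.length) ∈ M.accepts)
/-- `L` is recognized by a deterministic finite automaton with `k`-bit prefix advice. -/
def RecognizedWithPrefixAdvice {α : Type*} (L : Set (List α)) (k : ℕ) : Prop :=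
  ∃ (σ : Type) (_ : Fintype σ) (M : DFA (Bool ⊕ α) σ) (h : ℕ → Fin k → Bool),
    ∀ w : List α, w ∈ L ↔
      ((List.ofFn (h w.length)).map Sum.inl ++ w.map Sum.inr) ∈ M.accepts

namespace InkdotAux

/-- Number of possible advice strings. -/
abbrev Nk (k : ℕ) : ℕ := Fintype.card (Fin k → Bool)

/-- Bounded-length prefix tracker. -/
def Pre (α : Type) (k : ℕ) : Type := {l : List α // l.length ≤ Nk k}

lemma pre_finite (α : Type) [Fintype α] (k : ℕ) : Finite (Pre α k) := by
  apply Finite.of_injective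
    (fun l : Pre α k => (fun i : Fin (Nk k + 1) => l.val[i.val]?))
  intro l₁ l₂ h
  apply Subtype.ext
  apply List.ext_getElem?
  intro n
  by_cases hn : n < Nk k + 1
  · exact congrFun h ⟨n, hn⟩
  · have h1 := l₁.2
    have h2 := l₂.2
    rw [List.getElem?_eq_none_iff.mpr (by omega), List.getElem?_eq_none_iff.mpr (by omega)]

/-- State of the inkdot machine. -/
def St (α σ : Type) (k : ℕ) : Type :=
  Pre α k × Option (Fin k → Bool) × ((Fin k → Bool) → σ)

def preStep {α : Type} {k : ℕ} (p : Pre α k) (x : α) : Pre α k :=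
  if h : p.val.length < Nk k then ⟨p.val ++ [x], by
    simp only [List.length_append, List.length_singleton]; omega⟩ else p

/-- Decode an inkdot position into an advice string. -/
noncomputable def dec (k : ℕ) (p : ℕ) (h : p < Nk k) : Fin k → Bool :=
  (Fintype.equivFin (Fin k → Bool)).symm ⟨p, h⟩

noncomputable def foundStep {α : Type} {k : ℕ} (p : Pre α k) (f : Option (Fin k → Bool))
    (b : Bool) : Option (Fin k → Bool) :=
  if h : b = true ∧ p.val.length < Nk k then some (dec k p.val.length h.2) else f

def adv {α : Type} {k : ℕ} (a : Fin k → Bool) : List (Bool ⊕ α) :=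
  (List.ofFn a).map Sum.inl

/-- The inkdot machine. -/
noncomputable def M' {α σ : Type} {k : ℕ} (M : DFA (Bool ⊕ α) σ) (L : Set (List α)) :
    DFA (α × Bool) (St α σ k) where
  step s c := ⟨preStep s.1 c.1, foundStep s.1 s.2.1 c.2,
    fun a => M.step (s.2.2 a) (Sum.inr c.1)⟩
  start := ⟨⟨[], by simp⟩, none, fun a => M.eval (adv a)⟩
  accept := {s | match s.2.1 with
    | some a => s.2.2 a ∈ M.accept
    | none => s.1.val ∈ L}

def pref {α : Type} (k : ℕ) (w : List α) : Pre α k :=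
  ⟨w.take (Nk k), by simp only [List.length_take]; omega⟩

lemma preStep_pref {α : Type} {k : ℕ} (w : List α) (x : α) :
    preStep (pref k w) x = pref k (w ++ [x]) := by
  apply Subtype.ext
  unfold preStep pref
  split_ifs with h
  · simp only [List.length_take] at h
    have hw : w.length < Nk k := by omega
    simp only
    simp only [List.length_take, h, ↓reduceDIte]
    show List.take (Nk k) w ++ [x] = _
    rw [List.take_of_length_le hw.le,
      List.take_of_length_le (by simp only [List.length_append, List.length_singleton]; omega)]
  · simp only [List.length_take] at h
    have hw : Nk k ≤ w.length := by omega
    simp only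
    simp only [List.length_take, h, ↓reduceDIte]
    show List.take (Nk k) w = _
    rw [List.take_append_of_le_length hw]

lemma pref_val_length {α : Type} {k : ℕ} (w : List α) :
    (pref k w).val.length = min (Nk k) w.length := by
  simp [pref]

lemma markWord_append {α : Type} (w : List α) (x : α) (S : Finset ℕ) :
    markWord (w ++ [x]) S = markWord w S ++ [(x, decide (w.length ∈ S))] := by
  simp [markWord, List.zipIdx_append]

lemma sim_step {α σ : Type} {k : ℕ} (M : DFA (Bool ⊕ α) σ) (w : List α) (x : α) :
    (fun a : Fin k → Bool => M.step (M.eval (adv a ++ w.map Sum.inr)) (Sum.inr x))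
      = fun a => M.eval (adv a ++ (w ++ [x]).map Sum.inr) := by
  funext a
  rw [show adv (α := α) a ++ (w ++ [x]).map Sum.inr
      = (adv a ++ w.map Sum.inr) ++ [Sum.inr x] by rw [List.map_append]; simp]
  exact (M.evalFrom_append_singleton M.start (adv a ++ w.map Sum.inr) (Sum.inr x)).symm

lemma eval_markWord_empty {α σ : Type} {k : ℕ} (M : DFA (Bool ⊕ α) σ)
    (L : Set (List α)) (w : List α) :
    (M' (k := k) M L).eval (markWord w ∅)
      = (pref k w, none, fun a => M.eval (adv a ++ w.map Sum.inr)) := by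
  induction w using List.reverseRecOn with
  | nil => simp [markWord, M', DFA.eval, pref, adv]; rfl
  | append_singleton w x ih =>
      rw [markWord_append, DFA.eval_append_singleton, ih]
      show (preStep (pref k w) x, foundStep (pref k w) none (decide (w.length ∈ (∅ : Finset ℕ))),
        fun a => M.step (M.eval (adv a ++ w.map Sum.inr)) (Sum.inr x)) = _
      rw [preStep_pref, sim_step]
      have : foundStep (pref k w) none (decide (w.length ∈ (∅ : Finset ℕ)))
          = none := by
        unfold foundStep
        rw [dif_neg]
        simp
      rw [this]

lemma eval_markWord_single {α σ : Type} {k : ℕ} (M : DFA (Bool ⊕ α) σ)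
    (L : Set (List α)) (p : ℕ) (hp : p < Nk k) (w : List α) :
    (M' (k := k) M L).eval (markWord w {p})
      = (pref k w, if p < w.length then some (dec k p hp) else none,
          fun a => M.eval (adv a ++ w.map Sum.inr)) := by
  induction w using List.reverseRecOn with
  | nil => simp [markWord, M', DFA.eval, pref, adv]; rfl
  | append_singleton w x ih =>
      rw [markWord_append, DFA.eval_append_singleton, ih]
      show (preStep (pref k w) x,
        foundStep (pref k w) (if p < w.length then some (dec k p hp) else none)
          (decide (w.length ∈ ({p} : Finset ℕ))),
        fun a => M.step (M.eval (adv a ++ w.map Sum.inr)) (Sum.inr x)) = _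
      rw [preStep_pref, sim_step]
      have hfound : foundStep (pref k w) (if p < w.length then some (dec k p hp) else none)
          (decide (w.length ∈ ({p} : Finset ℕ)))
          = if p < (w ++ [x]).length then some (dec k p hp) else none := by
        unfold foundStep
        rcases eq_or_ne w.length p with heq | hne
        · have hlen : (pref k w).val.length = p := by
            rw [pref_val_length, heq]
            omega
          rw [dif_pos ⟨by simp [heq], by rw [hlen]; exact hp⟩]
          have : p < (w ++ [x]).length := by simp [← heq]
          rw [if_pos this]
          congr 1
          unfold dec
          congr 1
          exact Fin.ext hlen
        · rw [dif_neg (by simp [hne])]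
          by_cases hpw : p < w.length
          · rw [if_pos hpw, if_pos (by
              simp only [List.length_append, List.length_singleton]; omega)]
          · rw [if_neg hpw, if_neg (by
              simp only [List.length_append, List.length_singleton]; omega)]
      rw [hfound]

end InkdotAux

open InkdotAux in
/-- prefix advice of any constant number of bits can be replaced by
a single inkdot of advice. -/
theorem prefix_advice_subset_one_inkdot (k : ℕ) (α : Type) [Fintype α]
    (L : Set (List α)) (hL : RecognizedWithPrefixAdvice L k) :
    RecognizedWithInkdots L (fun _ => 1) := by
  classical
  obtain ⟨σ, hσ, M, h, hM⟩ := hL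
  haveI := hσ
  haveI : Finite (Pre α k) := pre_finite α k
  haveI : Finite (St α σ k) := by unfold St; infer_instance
  set e := Fintype.equivFin (Fin k → Bool) with he
  refine ⟨St α σ k, Fintype.ofFinite _, M' M L,
    fun n => if Nk k ≤ n then {(e (h n)).val} else ∅, ?_, ?_, ?_⟩
  · intro n i hi
    dsimp only at hi
    split_ifs at hi with hn
    · simp only [Finset.mem_singleton] at hi
      subst hi
      exact lt_of_lt_of_le (e (h n)).isLt hn
    · simp at hi
  · intro n
    dsimp only
    split_ifs <;> simp
  · intro w
    rw [DFA.mem_accepts]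
    dsimp only
    by_cases hn : Nk k ≤ w.length
    · rw [if_pos hn,
        eval_markWord_single M L (e (h w.length)).val (e (h w.length)).isLt w,
        if_pos (lt_of_lt_of_le (e (h w.length)).isLt hn)]
      have hdec : dec k (e (h w.length)).val (e (h w.length)).isLt = h w.length := by
        unfold dec
        rw [← he]
        rw [show (⟨(e (h w.length)).val, (e (h w.length)).isLt⟩ : Fin (Nk k))
          = e (h w.length) from Fin.ext rfl]
        exact e.symm_apply_apply _
      rw [hdec]
      show w ∈ L ↔ M.eval (adv (h w.length) ++ w.map Sum.inr) ∈ M.accept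
      rw [← DFA.mem_accepts]
      exact hM w
    · rw [if_neg hn, eval_markWord_empty M L w]
      show w ∈ L ↔ (pref k w).val ∈ L
      have : (pref k w).val = w := List.take_of_length_le (by omega)
      rw [this]
end

section
/- For every positive integer m, the language L_m = { (0^i 1^i)^⌈m/2⌉ (0^i)^(m+1−2⌈m/2⌉) : i > 0 } over {0,1} (the set of strings consisting of m+1 alternating equal-length segments of 0's and 1's, beginning with 0's) is recognized by a deterministic finite automaton with at most m inkdots of advice. -/
/-- The language `L_m = { (0^i 1^i)^⌈m/2⌉ (0^i)^(m+1-2⌈m/2⌉) : i > 0 }`: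
`m+1` alternating equal-length segments of `0`s and `1`s, beginning with `0`s
(`false` plays the role of `0` and `true` the role of `1`). -/
def Lm (m : ℕ) : Set (List Bool) :=
  { w | ∃ i : ℕ, 0 < i ∧
      w = (List.replicate ((m + 1) / 2)
              (List.replicate i false ++ List.replicate i true)).flatten ++
          (List.replicate (m + 1 - 2 * ((m + 1) / 2)) (List.replicate i false)).flatten }


namespace LmAux

/-- Transition function on ℕ; state `m+1` is the dead state, states `0..m`
count the number of inkdots (marks) seen so far. -/
def stepN (m c : ℕ) (a : Bool × Bool) : ℕ :=
  if c ≤ m ∧ a.1 = decide (c % 2 = 1) ∧ (a.2 = true → c < m) then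
    (if a.2 then c + 1 else c) else m + 1

/-- Declarative description of acceptance. -/
def Valid (m : ℕ) : ℕ → List (Bool × Bool) → Prop
  | c, [] => c = m
  | c, a :: t => a.1 = decide (c % 2 = 1) ∧ Valid m (if a.2 then c + 1 else c) t

theorem stepN_le (m c : ℕ) (a : Bool × Bool) : stepN m c a ≤ m + 1 := by
  unfold stepN
  split
  · rename_i h
    obtain ⟨h1, _, _⟩ := h
    split <;> omega
  · exact le_refl _

theorem foldl_dead (m : ℕ) : ∀ l : List (Bool × Bool), l.foldl (stepN m) (m + 1) = m + 1 := by
  intro l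
  induction l with
  | nil => rfl
  | cons a t ih =>
    have : stepN m (m + 1) a = m + 1 := by
      unfold stepN; rw [if_neg]; rintro ⟨h, -⟩; omega
    simp [List.foldl_cons, this, ih]

theorem Valid.le {m c : ℕ} {l : List (Bool × Bool)} (h : Valid m c l) : c ≤ m := by
  induction l generalizing c with
  | nil => exact le_of_eq h
  | cons a t ih =>
    obtain ⟨-, h2⟩ := h
    have := ih h2
    split at this <;> omega

theorem valid_count {m : ℕ} : ∀ {l : List (Bool × Bool)} {c : ℕ}, Valid m c l →
    c + l.countP (fun a => a.2) = m := by
  intro l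
  induction l with
  | nil => intro c h; simpa [Valid] using h
  | cons a t ih =>
    intro c h
    obtain ⟨-, h2⟩ := h
    have := ih h2
    rw [List.countP_cons]
    by_cases ha : a.2 = true
    · rw [if_pos ha] at this
      simp only [ha, if_true]
      omega
    · rw [if_neg ha] at this
      simp only [Bool.not_eq_true] at ha
      simp [ha]
      omega

theorem foldl_eq_iff_valid (m : ℕ) : ∀ (l : List (Bool × Bool)) (c : ℕ),
    l.foldl (stepN m) c = m ↔ Valid m c l := by
  intro l
  induction l with
  | nil => intro c; simp [Valid]
  | cons a t ih =>
    intro c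
    rw [List.foldl_cons]
    by_cases hc : c ≤ m
    · by_cases hb : a.1 = decide (c % 2 = 1)
      · by_cases ha : a.2 = true
        · by_cases hcm : c < m
          · have hs : stepN m c a = c + 1 := by unfold stepN; rw [if_pos ⟨hc, hb, fun _ => hcm⟩, if_pos ha]
            rw [hs, ih]
            simp [Valid, hb, ha]
          · -- c = m, mark: dead
            have hs : stepN m c a = m + 1 := by
              unfold stepN; rw [if_neg]; rintro ⟨-, -, h3⟩; exact hcm (h3 ha)
            rw [hs, foldl_dead]
            apply iff_of_false (by omega)
            rintro ⟨-, h2⟩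
            rw [if_pos ha] at h2
            have := h2.le
            omega
        · simp only [Bool.not_eq_true] at ha
          have hs : stepN m c a = c := by
            unfold stepN; rw [if_pos ⟨hc, hb, fun h => by rw [h] at ha; cases ha⟩, if_neg (by simp [ha])]
          rw [hs, ih]
          simp [Valid, hb, ha]
      · have hs : stepN m c a = m + 1 := by
          unfold stepN; rw [if_neg]; rintro ⟨-, h2, -⟩; exact hb h2
        rw [hs, foldl_dead]
        apply iff_of_false (by omega)
        rintro ⟨h1, -⟩
        exact hb h1
    · have hs : stepN m c a = m + 1 := by
        unfold stepN; rw [if_neg]; rintro ⟨h1, -⟩; exact hc h1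
      rw [hs, foldl_dead]
      apply iff_of_false (by omega)
      rintro ⟨-, h2⟩
      have := h2.le
      split at this <;> omega

/-- The advice marks for length `(m+1)*i`: positions `(j+1)*i - 1` for `j < m`. -/
def marks (m i : ℕ) : Finset ℕ := (Finset.range m).image (fun j => (j + 1) * i - 1)

theorem mem_marks {m i k : ℕ} : k ∈ marks m i ↔ ∃ j, j < m ∧ (j + 1) * i - 1 = k := by
  simp [marks]

/-- The expected letter at position `p`. -/
def f (i p : ℕ) : Bool := decide ((p / i) % 2 = 1)

theorem main (m i : ℕ) (hi : 0 < i) :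
    ∀ (w : List Bool) (k : ℕ), k + w.length = (m + 1) * i →
      (Valid m (min (k / i) m)
          ((w.zipIdx k).map (fun p => (p.1, decide (p.2 ∈ marks m i)))) ↔
        ∀ p, (hp : p < w.length) → w[p] = f i (k + p)) := by
  intro w
  induction w with
  | nil =>
    intro k hk
    simp only [List.length_nil, Nat.add_zero] at hk
    subst hk
    rw [Nat.mul_div_cancel _ hi]
    simp [Valid]
  | cons b w ih =>
    intro k hk
    simp only [List.length_cons] at hk
    have hklt : k < (m + 1) * i := by omega
    have hdiv : k / i ≤ m := by
      have := (Nat.div_lt_iff_lt_mul hi (x := k) (y := m + 1)).mpr hklt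
      omega
    rw [min_eq_left hdiv]
    rw [List.zipIdx_cons, List.map_cons]
    have hstep : (if decide (k ∈ marks m i) then k / i + 1 else k / i) = min ((k + 1) / i) m := by
      by_cases hks : k ∈ marks m i
      · obtain ⟨j, hj, hjk⟩ := mem_marks.mp hks
        have hji : (j + 1) * i = j * i + i := by ring
        have hk1 : k + 1 = i * (j + 1) := by rw [Nat.mul_comm]; omega
        have hkd : k / i = j := by
          have : k = i * j + (i - 1) := by
            have : i * j = j * i := Nat.mul_comm i j
            omega
          rw [this, Nat.mul_add_div hi, Nat.div_eq_of_lt (by omega)]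
          omega
        have hk1d : (k + 1) / i = j + 1 := by rw [hk1, Nat.mul_div_cancel_left _ hi]
        rw [hkd, hk1d]
        simp [hks, min_eq_left (by omega : j + 1 ≤ m)]
      · by_cases hd : i ∣ (k + 1)
        · obtain ⟨t, ht⟩ := hd
          have ht1 : 1 ≤ t := by
            by_contra h
            have ht0 : t = 0 := by omega
            subst ht0
            simp at ht
          have htle : t ≤ m + 1 := by
            have h1 : i * t ≤ i * (m + 1) := by
              have h2 : (m + 1) * i = i * (m + 1) := Nat.mul_comm _ _
              omega
            exact Nat.le_of_mul_le_mul_left h1 hi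
          have htm : t = m + 1 := by
            by_contra h
            have htm' : t ≤ m := by omega
            apply hks
            rw [mem_marks]
            refine ⟨t - 1, by omega, ?_⟩
            have : (t - 1 + 1) * i = t * i := by congr 1; omega
            rw [this, Nat.mul_comm]; omega
          subst htm
          have hkd : k / i = m := by
            have : k = i * m + (i - 1) := by
              have h2 : i * (m + 1) = i * m + i := by ring
              omega
            rw [this, Nat.mul_add_div hi, Nat.div_eq_of_lt (by omega)]
            omega
          have hk1d : (k + 1) / i = m + 1 := by rw [ht, Nat.mul_div_cancel_left _ hi]
          rw [hkd, hk1d]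
          simp [hks]
        · have : (k + 1) / i = k / i := by
            rw [Nat.succ_div, if_neg hd]
            omega
          rw [this]
          simp [hks, min_eq_left hdiv]
    constructor
    · rintro ⟨h1, h2⟩
      rw [hstep] at h2
      rw [ih (k + 1) (by omega)] at h2
      intro p hp
      match p with
      | 0 =>
        simpa [f] using h1
      | p + 1 =>
        have := h2 p (by simpa using hp)
        simpa [show k + 1 + p = k + (p + 1) by omega] using this
    · intro H
      refine ⟨by exact H 0 (by simp), ?_⟩
      rw [hstep, ih (k + 1) (by omega)]
      intro p hp
      have := H (p + 1) (by simpa using Nat.succ_lt_succ hp)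
      simpa [show k + 1 + p = k + (p + 1) by omega] using this


/-- The unique candidate word of parameter `i`. -/
def target (m i : ℕ) : List Bool := (List.range ((m + 1) * i)).map (f i)

theorem seg_eq (i : ℕ) (hi : 0 < i) (j : ℕ) :
    (List.range i).map (fun p => f i (j * i + p)) = List.replicate i (decide (j % 2 = 1)) := by
  rw [List.eq_replicate_iff]
  refine ⟨by simp, ?_⟩
  intro b hb
  simp only [List.mem_map, List.mem_range] at hb
  obtain ⟨p, hp, rfl⟩ := hb
  have h2 : (j * i + p) / i = j := by
    have h3 : j * i + p = i * j + p := by ring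
    rw [h3, Nat.mul_add_div hi, Nat.div_eq_of_lt hp]
    omega
  simp [f, h2]

theorem f_period (i : ℕ) (hi : 0 < i) (k p : ℕ) : f i (2 * k * i + p) = f i p := by
  have h3 : 2 * k * i + p = i * (2 * k) + p := by ring
  unfold f
  rw [h3, Nat.mul_add_div hi, decide_eq_decide]
  omega

theorem blk_eq (i : ℕ) (hi : 0 < i) :
    (List.range (2 * i)).map (f i) = List.replicate i false ++ List.replicate i true := by
  have h2 : 2 * i = i + i := by ring
  rw [h2, List.range_add, List.map_append, List.map_map]
  congr 1
  · have := seg_eq i hi 0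
    simpa using this
  · have := seg_eq i hi 1
    simpa [Function.comp_def] using this

theorem flatten_rep_blk (i : ℕ) (hi : 0 < i) : ∀ k,
    (List.replicate k (List.replicate i false ++ List.replicate i true)).flatten =
      (List.range (2 * k * i)).map (f i) := by
  intro k
  induction k with
  | zero => simp
  | succ k ih =>
    rw [List.replicate_succ', List.flatten_append, ih]
    have h2 : 2 * (k + 1) * i = 2 * k * i + 2 * i := by ring
    rw [h2, List.range_add, List.map_append, List.map_map]
    simp only [List.flatten_cons, List.flatten_nil, List.append_nil]
    congr 1
    rw [show (List.replicate i false ++ List.replicate i true) = (List.range (2 * i)).map (f i) from (blk_eq i hi).symm]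
    symm
    apply List.map_congr_left
    intro p hp
    simpa using f_period i hi k p

theorem lm_word_eq (m i : ℕ) (hi : 0 < i) :
    (List.replicate ((m + 1) / 2) (List.replicate i false ++ List.replicate i true)).flatten ++
      (List.replicate (m + 1 - 2 * ((m + 1) / 2)) (List.replicate i false)).flatten = target m i := by
  rcases Nat.even_or_odd (m + 1) with ⟨k, hk⟩ | ⟨k, hk⟩
  · have hdiv : (m + 1) / 2 = k := by omega
    rw [hdiv]
    rw [show m + 1 - 2 * k = 0 by omega]
    simp only [List.replicate_zero, List.flatten_nil, List.append_nil]
    rw [flatten_rep_blk i hi k]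
    unfold target
    rw [show (m + 1) * i = 2 * k * i from by rw [show m + 1 = 2 * k by omega]]
  · have hdiv : (m + 1) / 2 = k := by omega
    rw [hdiv]
    rw [show m + 1 - 2 * k = 1 by omega]
    simp only [List.replicate_one, List.flatten_cons, List.flatten_nil, List.append_nil]
    rw [flatten_rep_blk i hi k]
    unfold target
    have h2 : (m + 1) * i = 2 * k * i + i := by
      have : m + 1 = 2 * k + 1 := by omega
      rw [this]; ring
    rw [h2, List.range_add, List.map_append, List.map_map]
    congr 1
    have := seg_eq i hi (2 * k)
    rw [show (2 * k) % 2 = 0 by omega] at this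
    simp only [show decide (0 = 1) = false from rfl] at this
    rw [← this]
    apply List.map_congr_left
    intro p hp
    simp only [Function.comp_apply]

theorem target_length (m i : ℕ) : (target m i).length = (m + 1) * i := by
  simp [target]

theorem target_getElem (m i p : ℕ) (hp : p < (m + 1) * i) :
    (target m i)[p]'(by simpa [target] using hp) = f i p := by
  simp [target]

theorem eq_target_iff (m i : ℕ) (w : List Bool) :
    w = target m i ↔ w.length = (m + 1) * i ∧ ∀ p, (hp : p < w.length) → w[p] = f i p := by
  constructor
  · rintro rfl
    refine ⟨target_length m i, ?_⟩
    intro p hp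
    rw [target_length] at hp
    exact target_getElem m i p hp
  · rintro ⟨hl, hp⟩
    apply List.ext_getElem (by rw [hl, target_length])
    intro p h1 h2
    rw [hp p h1, target_getElem m i p (by omega)]

end LmAux

namespace LmAux

/-- The DFA. -/
def M (m : ℕ) : DFA (Bool × Bool) (Fin (m + 2)) where
  step s a := ⟨stepN m s.val a, Nat.lt_succ_of_le (stepN_le m s.val a)⟩
  start := ⟨0, by omega⟩
  accept := {s | s.val = m}

theorem evalFrom_val (m : ℕ) : ∀ (l : List (Bool × Bool)) (s : Fin (m + 2)),
    ((M m).evalFrom s l).val = l.foldl (stepN m) s.val := by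
  intro l
  induction l with
  | nil => intro s; rfl
  | cons a t ih =>
    intro s
    rw [show (M m).evalFrom s (a :: t) = (M m).evalFrom ((M m).step s a) t from rfl, ih,
      List.foldl_cons]
    rfl

/-- The advice function. -/
def adv (m n : ℕ) : Finset ℕ :=
  if (m + 1) ∣ n ∧ 0 < n then marks m (n / (m + 1)) else ∅

theorem accepts_iff (m : ℕ) (w : List Bool) (S : Finset ℕ) :
    markWord w S ∈ (M m).accepts ↔ Valid m 0 (markWord w S) := by
  rw [DFA.mem_accepts]
  change ((M m).eval (markWord w S)).val = m ↔ _
  rw [show ((M m).eval (markWord w S)).val = (markWord w S).foldl (stepN m) 0 from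
    evalFrom_val m _ _]
  exact foldl_eq_iff_valid m _ 0

theorem not_valid_empty (m : ℕ) (hm : 0 < m) (w : List Bool) :
    ¬ Valid m 0 (markWord w ∅) := by
  intro h
  have hcount := valid_count h
  have hc : (markWord w ∅).countP (fun a => a.2) = 0 := by
    rw [List.countP_eq_zero]
    intro a ha
    simp only [markWord, List.mem_map] at ha
    obtain ⟨p, -, rfl⟩ := ha
    simp
  omega

theorem mem_Lm_iff (m : ℕ) (w : List Bool) : w ∈ Lm m ↔ ∃ i, 0 < i ∧ w = target m i := by
  simp only [Lm, Set.mem_setOf_eq]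
  constructor
  · rintro ⟨i, hi, h⟩
    exact ⟨i, hi, by rw [h, lm_word_eq m i hi]⟩
  · rintro ⟨i, hi, h⟩
    exact ⟨i, hi, by rw [h, lm_word_eq m i hi]⟩

end LmAux

/-- `L_m` is recognized by a dfa with at most `m` inkdots of advice. -/
theorem Lm_mem_inkdots (m : ℕ) (hm : 0 < m) :
    RecognizedWithInkdots (Lm m) (fun _ => m) := by
  refine ⟨Fin (m + 2), inferInstance, LmAux.M m, LmAux.adv m, ?_, ?_, ?_⟩
  · intro n x hx
    unfold LmAux.adv at hx
    split at hx
    · rename_i hgood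
      obtain ⟨⟨i, hni⟩, hn⟩ := hgood
      have hi : 0 < i := by
        rcases Nat.eq_zero_or_pos i with h | h
        · exfalso; subst h; rw [Nat.mul_zero] at hni; omega
        · exact h
      have hdivi : n / (m + 1) = i := by rw [hni, Nat.mul_div_cancel_left _ (by omega : 0 < m + 1)]
      rw [hdivi] at hx
      obtain ⟨j, hj, hjx⟩ := LmAux.mem_marks.mp hx
      have h1 : (j + 1) * i ≤ (m + 1) * i := Nat.mul_le_mul_right i (by omega)
      omega
    · simp at hx
  · intro n
    unfold LmAux.adv
    split
    · exact le_trans Finset.card_image_le (by simp)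
    · simp
  · intro w
    by_cases hgood : (m + 1) ∣ w.length ∧ 0 < w.length
    · obtain ⟨⟨i, hni⟩, hn⟩ := hgood
      have hi : 0 < i := by
        rcases Nat.eq_zero_or_pos i with h | h
        · exfalso; subst h; rw [Nat.mul_zero] at hni; omega
        · exact h
      have hdivi : w.length / (m + 1) = i := by
        rw [hni, Nat.mul_div_cancel_left _ (by omega : 0 < m + 1)]
      have hadv : LmAux.adv m w.length = LmAux.marks m i := by
        rw [LmAux.adv, if_pos ⟨⟨i, hni⟩, hn⟩, hdivi]
      rw [hadv, LmAux.accepts_iff, LmAux.mem_Lm_iff]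
      have hmain := LmAux.main m i hi w 0 (by simpa using hni)
      rw [show min (0 / i) m = 0 from by simp] at hmain
      rw [show markWord w (LmAux.marks m i) =
        (w.zipIdx 0).map (fun p => (p.1, decide (p.2 ∈ LmAux.marks m i))) from rfl]
      rw [hmain]
      constructor
      · rintro ⟨i', hi', hw⟩
        have hlen : w.length = (m + 1) * i' := by rw [hw, LmAux.target_length]
        have hii : i' = i := by
          have := Nat.eq_of_mul_eq_mul_left (show 0 < m + 1 by omega) (hni ▸ hlen).symm
          omega
        subst hii
        have := ((LmAux.eq_target_iff m i' w).mp hw).2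
        intro p hp
        simpa using this p hp
      · intro hv
        refine ⟨i, hi, (LmAux.eq_target_iff m i w).mpr ⟨hni, ?_⟩⟩
        intro p hp
        simpa using hv p hp
    · have hadv : LmAux.adv m w.length = ∅ := by rw [LmAux.adv, if_neg hgood]
      rw [hadv]
      constructor
      · intro hmem
        obtain ⟨i, hi, rfl⟩ := (LmAux.mem_Lm_iff m _).mp hmem
        exact absurd ⟨⟨i, LmAux.target_length m i⟩,
          by rw [LmAux.target_length]; positivity⟩ hgood
      · intro hacc
        exact absurd ((LmAux.accepts_iff m w ∅).mp hacc) (LmAux.not_valid_empty m hm w)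
end

section
/- For every positive integer m, the language L_m = { (0^i 1^i)^⌈m/2⌉ (0^i)^(m+1−2⌈m/2⌉) : i > 0 } over {0,1} (the set of strings consisting of m+1 alternating equal-length segments of 0's and 1's, beginning with 0's) is not recognized by any deterministic finite automaton with at most m−1 inkdots of advice. -/
lemma markWord_map (n : ℕ) (f : ℕ → Bool) (S : Finset ℕ) :
    markWord ((List.range n).map f) S
      = (List.range n).map (fun j => (f j, decide (j ∈ S))) := by
  apply List.ext_getElem
  · simp [markWord]
  · intro j h1 h2
    simp [markWord]

lemma iter_period {σ : Type} [Fintype σ] (f : σ → σ) (q : σ) (j : ℕ)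
    (hj : Fintype.card σ ≤ j) :
    f^[j + (Fintype.card σ).factorial] q = f^[j] q := by
  set c := Fintype.card σ with hc
  obtain ⟨x, -, y, -, hxy, hfxy⟩ :
      ∃ x ∈ (Finset.univ : Finset (Fin (c+1))), ∃ y ∈ Finset.univ,
        x ≠ y ∧ f^[(x : ℕ)] q = f^[(y : ℕ)] q := by
    apply Finset.exists_ne_map_eq_of_card_lt_of_maps_to (t := (Finset.univ : Finset σ))
    · simp [hc]
    · intro a _; exact Finset.mem_univ _
  have main : ∀ u v : ℕ, u < v → v ≤ c → f^[u] q = f^[v] q →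
      f^[j + c.factorial] q = f^[j] q := by
    intro u v huv hvc hfuv
    set d := v - u with hd
    have hkey : ∀ t, f^[t + v] q = f^[t + u] q := by
      intro t
      rw [Function.iterate_add_apply, Function.iterate_add_apply, ← hfuv]
    have hstep : ∀ w, u ≤ w → f^[w + d] q = f^[w] q := by
      intro w hw
      have h1 : w + d = (w - u) + v := by omega
      have h2 : w = (w - u) + u := by omega
      rw [h1, hkey, ← h2]
    have hmult : ∀ k w, u ≤ w → f^[w + k * d] q = f^[w] q := by
      intro k
      induction k with
      | zero => simp
      | succ k ih =>
        intro w hw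
        have : w + (k + 1) * d = (w + d) + k * d := by ring
        rw [this, ih (w + d) (by omega), hstep w hw]
    have hdvd : d ∣ c.factorial := Nat.dvd_factorial (by omega) (by omega)
    have : c.factorial = (c.factorial / d) * d := (Nat.div_mul_cancel hdvd).symm
    rw [this]
    exact hmult _ j (by omega)
  rcases lt_or_gt_of_ne hxy with h | h
  · exact main x y (by exact_mod_cast h) (by omega) hfxy
  · exact main y x (by exact_mod_cast h) (by omega) hfxy.symm

lemma evalFrom_replicate {σ : Type} {γ : Type*} (M : DFA γ σ) (q : σ) (x : γ) (j : ℕ) :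
    M.evalFrom q (List.replicate j x) = (fun t => M.step t x)^[j] q := by
  induction j generalizing q with
  | zero => simp [DFA.evalFrom]
  | succ j ih =>
    rw [List.replicate_succ]
    show M.evalFrom (M.step q x) (List.replicate j x) = _
    rw [ih, Function.iterate_succ_apply]

lemma pump {σ : Type} [Fintype σ] {γ : Type*} (M : DFA γ σ) (q : σ) (x : γ) (j : ℕ)
    (hj : Fintype.card σ ≤ j) :
    M.evalFrom q (List.replicate (j + (Fintype.card σ).factorial) x)
      = M.evalFrom q (List.replicate j x) := by
  rw [evalFrom_replicate, evalFrom_replicate, iter_period _ _ _ hj]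

lemma map_range'_eq_replicate {γ : Type*} (F : ℕ → γ) (s l : ℕ) (v : γ)
    (h : ∀ j, s ≤ j → j < s + l → F j = v) :
    (List.range' s l).map F = List.replicate l v := by
  rw [List.eq_replicate_iff]
  constructor
  · simp
  · intro b hb
    simp only [List.mem_map, List.mem_range'_1] at hb
    obtain ⟨j, ⟨h1, h2⟩, rfl⟩ := hb
    exact h j h1 h2

lemma range_split (a b : ℕ) :
    List.range (a + b) = List.range a ++ List.range' a b := by
  rw [List.range_eq_range', List.range_eq_range',
    ← List.range'_append (s := 0) (m := a) (n := b) (step := 1)]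
  simp

lemma flat_eq (i : ℕ) (g : ℕ → Bool) (k : ℕ) :
    ((List.range k).map (fun t => List.replicate i (g t))).flatten
      = (List.range (k * i)).map (fun j => g (j / i)) := by
  induction k with
  | zero => simp
  | succ k ih =>
    rw [List.range_succ, List.map_append, List.flatten_append, ih,
      show (k+1) * i = k * i + i from by ring, range_split, List.map_append]
    simp only [List.map_cons, List.map_nil, List.flatten_cons, List.flatten_nil,
      List.append_nil]
    congr 1
    rw [map_range'_eq_replicate]
    intro j h1 h2
    congr 1
    exact Nat.div_eq_of_lt_le (by omega) (by rw [Nat.succ_mul]; omega)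

lemma rep_pair (i K : ℕ) :
    (List.replicate K (List.replicate i false ++ List.replicate i true)).flatten
      = ((List.range (2*K)).map (fun t => List.replicate i (decide (t % 2 = 1)))).flatten := by
  induction K with
  | zero => simp
  | succ K ih =>
    rw [List.replicate_succ', List.flatten_append, ih,
      show 2*(K+1) = (2*K + 1) + 1 from by ring, List.range_succ, List.range_succ]
    have e0 : (2*K) % 2 = 0 := by omega
    have e1 : (2*K+1) % 2 = 1 := by omega
    simp [e0, e1]

lemma lm_word (m i : ℕ) :
    (List.replicate ((m + 1) / 2) (List.replicate i false ++ List.replicate i true)).flatten ++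
      (List.replicate (m + 1 - 2 * ((m + 1) / 2)) (List.replicate i false)).flatten
    = (List.range ((m+1)*i)).map (fun j => decide ((j / i) % 2 = 1)) := by
  rw [← flat_eq i (fun t => decide (t % 2 = 1)) (m+1)]
  set K := (m+1)/2 with hK
  have hr : m + 1 - 2*K = 0 ∨ m + 1 - 2*K = 1 := by omega
  rcases hr with hr | hr
  · rw [hr, show m + 1 = 2*K from by omega, rep_pair]
    simp
  · rw [hr, show m + 1 = 2*K + 1 from by omega, List.range_succ, List.map_append,
      List.flatten_append, rep_pair]
    congr 1
    have e0 : (2*K) % 2 = 0 := by omega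
    simp [e0]

lemma mem_Lm_iff (m : ℕ) (w : List Bool) :
    w ∈ Lm m ↔ ∃ i : ℕ, 0 < i ∧
      w = (List.range ((m+1)*i)).map (fun j => decide ((j / i) % 2 = 1)) := by
  constructor
  · rintro ⟨i, hi, rfl⟩
    exact ⟨i, hi, lm_word m i⟩
  · rintro ⟨i, hi, rfl⟩
    exact ⟨i, hi, (lm_word m i).symm⟩

/-- `L_m` is not recognized by any dfa with at most `m-1` inkdots of advice. -/
theorem Lm_not_mem_fewer_inkdots (m : ℕ) (hm : 0 < m) :
    ¬ RecognizedWithInkdots (Lm m) (fun _ => m - 1) := by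
  rintro ⟨σ, instF, M, h, hlt, hcard, hrec⟩
  haveI := instF
  haveI : Nonempty σ := ⟨M.start⟩
  classical
  set c := Fintype.card σ with hcdef
  have hc : 0 < c := Fintype.card_pos
  set p := c.factorial with hpdef
  have hp : 0 < p := Nat.factorial_pos c
  set D := c + p with hDdef
  set i := 2 * D + 1 with hidef
  have hi : 0 < i := by omega
  set n := (m + 1) * i with hndef
  -- find a border whose D-window is inkdot-free
  have hwin : ∃ s, 1 ≤ s ∧ s ≤ m ∧ ∀ d ∈ h n, ¬ (s * i - D ≤ d ∧ d < s * i + D) := by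
    by_contra hcon
    push_neg at hcon
    have hex : ∀ s ∈ Finset.Icc 1 m, ∃ d ∈ h n, s * i - D ≤ d ∧ d < s * i + D := by
      intro s hs
      simp only [Finset.mem_Icc] at hs
      obtain ⟨d, hd1, hd2⟩ := hcon s hs.1 hs.2
      exact ⟨d, hd1, hd2⟩
    set f : ℕ → ℕ := fun s => if hs : s ∈ Finset.Icc 1 m then (hex s hs).choose else 0
      with hf
    have hmaps : ∀ s ∈ Finset.Icc 1 m, f s ∈ h n := by
      intro s hs
      simp only [hf, dif_pos hs]
      exact (hex s hs).choose_spec.1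
    have hwindow : ∀ s, ∀ hs : s ∈ Finset.Icc 1 m,
        s * i - D ≤ f s ∧ f s < s * i + D := by
      intro s hs
      simp only [hf, dif_pos hs]
      exact (hex s hs).choose_spec.2
    obtain ⟨x, hx, y, hy, hxy, hfeq⟩ :=
      Finset.exists_ne_map_eq_of_card_lt_of_maps_to
        (s := Finset.Icc 1 m) (t := h n)
        (by
          have h1 := hcard n
          simp only at h1
          rw [Nat.card_Icc]
          omega)
        hmaps
    have h1 := hwindow x hx
    have h2 := hwindow y hy
    rw [hfeq] at h1
    simp only [Finset.mem_Icc] at hx hy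
    rcases Nat.lt_or_ge x y with hlt' | hge
    · have hmul : (x + 1) * i ≤ y * i := Nat.mul_le_mul_right i (by omega)
      rw [add_mul, one_mul] at hmul
      omega
    · have hyx : y < x := by omega
      have hmul : (y + 1) * i ≤ x * i := Nat.mul_le_mul_right i (by omega)
      rw [add_mul, one_mul] at hmul
      omega
  obtain ⟨s, hs1, hsm, hfree⟩ := hwin
  set b := s * i with hbdef
  have hib : i ≤ b := by
    rw [hbdef]
    exact Nat.le_mul_of_pos_left i hs1
  have hbn : b + i ≤ n := by
    have := Nat.mul_le_mul_right i (show s + 1 ≤ m + 1 by omega)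
    rw [add_mul, one_mul] at this
    exact this
  have hsi : (s - 1) * i + i = b := by
    have h1 : s - 1 + 1 = s := by omega
    calc (s - 1) * i + i = ((s - 1) + 1) * i := by ring
    _ = s * i := by rw [h1]
  -- the words
  set a1 : Bool := decide ((s - 1) % 2 = 1) with ha1
  set a2 : Bool := decide (s % 2 = 1) with ha2
  set cf : ℕ → Bool := fun j => decide ((j / i) % 2 = 1) with hcf
  set cf' : ℕ → Bool := fun j => if b ≤ j ∧ j < b + p then a1 else cf j with hcf'
  set w : List Bool := (List.range n).map cf with hwdef
  set w' : List Bool := (List.range n).map cf' with hw'def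
  have hwlen : w.length = n := by rw [hwdef]; simp
  have hw'len : w'.length = n := by rw [hw'def]; simp
  have hwmem : w ∈ Lm m := by
    rw [mem_Lm_iff]
    exact ⟨i, hi, by rw [hwdef, hndef, hcf]⟩
  -- w' is not in Lm
  have hdivb : b / i = s := by rw [hbdef]; exact Nat.mul_div_cancel s hi
  have hw'mem : w' ∉ Lm m := by
    rw [mem_Lm_iff]
    rintro ⟨i', hi', he⟩
    have hlen2 : (m + 1) * i' = n := by
      have := congrArg List.length he
      rw [hw'len] at this
      simpa using this.symm
    have hii : i' = i := by
      rw [hndef] at hlen2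
      exact Nat.eq_of_mul_eq_mul_left (by omega) hlen2
    subst hii
    rw [hndef.symm] at he
    have hblt : b < n := by omega
    have hgb := congrArg (fun l => l[b]?) he
    simp only [List.getElem?_map, List.getElem?_range hblt, Option.map_some] at hgb
    rw [hw'def] at hgb
    simp only [List.getElem?_map, List.getElem?_range hblt, Option.map_some,
      Option.some.injEq] at hgb
    simp only [hcf'] at hgb
    rw [if_pos (show b ≤ b ∧ b < b + p from ⟨le_refl b, by omega⟩)] at hgb
    simp only [hcf, hdivb, ha1, decide_eq_decide] at hgb
    omega
  -- marked words
  set F : ℕ → Bool × Bool := fun j => (cf j, decide (j ∈ h n)) with hF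
  set F' : ℕ → Bool × Bool := fun j => (cf' j, decide (j ∈ h n)) with hF'
  have hmw : markWord w (h w.length) = (List.range n).map F := by
    rw [hwlen, hwdef, markWord_map]
  have hmw' : markWord w' (h w'.length) = (List.range n).map F' := by
    rw [hw'len, hw'def, markWord_map]
  -- splits of the ranges
  have e1 : List.range n = List.range (b + D) ++ List.range' (b + D) (n - (b + D)) := by
    conv_lhs => rw [show n = (b + D) + (n - (b + D)) from by omega]
    exact range_split _ _
  have e2 : List.range (b + D) = List.range b ++ List.range' b D := range_split b D
  have e3 : List.range b = List.range (b - D) ++ List.range' (b - D) D := by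
    conv_lhs => rw [show b = (b - D) + D from by omega]
    exact range_split _ _
  have e2' : List.range (b + D) = List.range (b + p) ++ List.range' (b + p) (D - p) := by
    conv_lhs => rw [show b + D = (b + p) + (D - p) from by omega]
    exact range_split _ _
  have e3' : List.range (b + p) = List.range (b - D) ++ List.range' (b - D) (D + p) := by
    conv_lhs => rw [show b + p = (b - D) + (D + p) from by omega]
    exact range_split _ _
  -- the content/mark of the pieces
  have hnotdot : ∀ j, b - D ≤ j → j < b + D → (decide (j ∈ h n) : Bool) = false := by
    intro j hj1 hj2
    have : j ∉ h n := fun hj => hfree j hj ⟨hj1, hj2⟩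
    simp [this]
  have hcfleft : ∀ j, b - D ≤ j → j < b → cf j = a1 := by
    intro j hj1 hj2
    rw [hcf, ha1]
    have hdiv : j / i = s - 1 := by
      apply Nat.div_eq_of_lt_le (by omega) (by rw [Nat.succ_mul]; omega)
    simp [hdiv]
  have hcfright : ∀ j, b ≤ j → j < b + i → cf j = a2 := by
    intro j hj1 hj2
    rw [hcf, ha2]
    have hdiv : j / i = s := by
      apply Nat.div_eq_of_lt_le (by omega) (by rw [Nat.succ_mul]; omega)
    simp [hdiv]
  have p2 : (List.range' (b - D) D).map F = List.replicate D (a1, false) := by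
    apply map_range'_eq_replicate
    intro j hj1 hj2
    rw [hF]
    simp only
    rw [hcfleft j hj1 (by omega), hnotdot j hj1 (by omega)]
  have p3 : (List.range' b D).map F = List.replicate D (a2, false) := by
    apply map_range'_eq_replicate
    intro j hj1 hj2
    rw [hF]
    simp only
    rw [hcfright j hj1 (by omega), hnotdot j (by omega) (by omega)]
  have p2' : (List.range' (b - D) (D + p)).map F' = List.replicate (D + p) (a1, false) := by
    apply map_range'_eq_replicate
    intro j hj1 hj2
    rw [hF']
    simp only
    rw [hnotdot j hj1 (by omega)]
    rw [hcf']
    simp only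
    by_cases hbj : b ≤ j
    · rw [if_pos ⟨hbj, by omega⟩]
    · rw [if_neg (by omega), hcfleft j hj1 (by omega)]
  have p3' : (List.range' (b + p) (D - p)).map F' = List.replicate (D - p) (a2, false) := by
    apply map_range'_eq_replicate
    intro j hj1 hj2
    rw [hF']
    simp only
    rw [hnotdot j (by omega) (by omega)]
    rw [hcf']
    simp only [if_neg (show ¬(b ≤ j ∧ j < b + p) from by omega)]
    rw [hcfright j (by omega) (by omega)]
  have p1 : (List.range (b - D)).map F' = (List.range (b - D)).map F := by
    apply List.map_congr_left
    intro j hj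
    rw [List.mem_range] at hj
    rw [hF', hF, hcf']
    simp only [if_neg (show ¬(b ≤ j ∧ j < b + p) from by omega)]
  have p4 : (List.range' (b + D) (n - (b + D))).map F'
      = (List.range' (b + D) (n - (b + D))).map F := by
    apply List.map_congr_left
    intro j hj
    rw [List.mem_range'_1] at hj
    rw [hF', hF, hcf']
    simp only [if_neg (show ¬(b ≤ j ∧ j < b + p) from by omega)]
  -- assemble
  have hWm : markWord w (h w.length)
      = ((List.range (b - D)).map F ++ List.replicate D (a1, false)
          ++ List.replicate D (a2, false))
          ++ (List.range' (b + D) (n - (b + D))).map F := by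
    rw [hmw, e1, e2, e3, List.map_append, List.map_append, List.map_append, p2, p3]
  have hWm' : markWord w' (h w'.length)
      = ((List.range (b - D)).map F ++ List.replicate (D + p) (a1, false)
          ++ List.replicate (D - p) (a2, false))
          ++ (List.range' (b + D) (n - (b + D))).map F := by
    rw [hmw', e1, e2', e3', List.map_append, List.map_append, List.map_append,
      p2', p3', p1, p4]
  -- the two runs end in the same state
  set q0 := M.evalFrom M.start ((List.range (b - D)).map F) with hq0
  have hpump1 : M.evalFrom q0 (List.replicate (D + p) (a1, false))
      = M.evalFrom q0 (List.replicate D (a1, false)) := by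
    exact pump M q0 (a1, false) D (by omega)
  have hpump2 : M.evalFrom (M.evalFrom q0 (List.replicate D (a1, false)))
      (List.replicate (D - p) (a2, false))
      = M.evalFrom (M.evalFrom q0 (List.replicate D (a1, false)))
      (List.replicate D (a2, false)) := by
    have hD2 : D - p = c := by omega
    have := pump M (M.evalFrom q0 (List.replicate D (a1, false))) (a2, false) c (le_refl c)
    rw [hD2, hDdef]
    exact this.symm
  have hsame : M.evalFrom M.start (markWord w' (h w'.length))
      = M.evalFrom M.start (markWord w (h w.length)) := by
    rw [hWm, hWm']
    rw [DFA.evalFrom_of_append, DFA.evalFrom_of_append, DFA.evalFrom_of_append,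
      DFA.evalFrom_of_append, DFA.evalFrom_of_append, DFA.evalFrom_of_append]
    rw [← hq0, hpump1, hpump2]
  -- contradiction
  have hacc := (hrec w).mp hwmem
  have hnacc : markWord w' (h w'.length) ∉ M.accepts := fun hx => hw'mem ((hrec w').mpr hx)
  rw [DFA.mem_accepts] at hacc hnacc
  exact hnacc (by rw [show M.eval (markWord w' (h w'.length))
      = M.evalFrom M.start (markWord w' (h w'.length)) from rfl, hsame]; exact hacc)
end

section
/- For every positive integer m, the class REG/(m−1)(⊙) of languages over {0,1} recognized by a deterministic finite automaton with at most m−1 inkdots of advice is strictly contained in the class REG/m(⊙) of languages recognized by a deterministic finite automaton with at most m inkdots of advice. -/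
lemma markWord_eq_range_map {α : Type*} (w : List α) (S : Finset ℕ) (d : α) :
    markWord w S = (List.range w.length).map
      (fun i => (w.getD i d, decide (i ∈ S))) := by
  apply List.ext_getElem
  · simp [markWord]
  · intro i h1 h2
    have hi : i < w.length := by simpa [markWord] using h1
    simp [markWord, List.getElem_zipIdx, List.getD_eq_getElem _ _ hi,
      List.getElem?_eq_getElem hi]

lemma evalFrom_range'_const {α σ : Type*} (M : DFA α σ) (F : ℕ → α) (c : α) :
    ∀ (k s : ℕ) (q : σ), (∀ i, s ≤ i → i < s + k → F i = c) →
      M.evalFrom q ((List.range' s k).map F) = (fun x => M.step x c)^[k] q := by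
  intro k
  induction k with
  | zero => intro s q _; simp [DFA.evalFrom]
  | succ k ih =>
    intro s q hF
    rw [List.range'_succ]
    have hs : F s = c := hF s le_rfl (by omega)
    have : M.evalFrom q ((s :: List.range' (s+1) k).map F)
        = M.evalFrom (M.step q (F s)) ((List.range' (s+1) k).map F) := rfl
    rw [this, hs, ih (s+1) _ (fun i h1 h2 => hF i (by omega) (by omega)),
      Function.iterate_succ_apply]

lemma exists_iterate_period {σ : Type*} [Finite σ] (f : σ → σ) :
    ∃ N per, 0 < per ∧ ∀ a, N ≤ a → f^[a + per] = f^[a] := by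
  obtain ⟨x, y, hne, heq⟩ := Finite.exists_ne_map_eq_of_infinite (fun n : ℕ => f^[n])
  have key : ∀ (i j : ℕ), i < j → f^[i] = f^[j] →
      ∃ N per, 0 < per ∧ ∀ a, N ≤ a → f^[a + per] = f^[a] := by
    intro i j hij hiter
    refine ⟨i, j - i, by omega, fun a ha => ?_⟩
    have h1 : a + (j - i) = (a - i) + j := by omega
    have h2 : a = (a - i) + i := by omega
    rw [h1, Function.iterate_add, ← hiter, ← Function.iterate_add, ← h2]
  rcases Nat.lt_or_ge x y with h | h
  · exact key x y h heq
  · exact key y x (by omega) heq.symm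

lemma range'_glue (x k : ℕ) : List.range' 0 x ++ List.range' x k = List.range' 0 (x + k) := by
  have := List.range'_append (s := 0) (m := x) (n := k) (step := 1)
  simpa [Nat.add_comm] using this

/-- positions that must be 1 -/
def reqSet (m n : ℕ) : Finset ℕ :=
  ((Finset.range m).image fun k => (k+1) * (n / (m+1))).filter (· < n)

def hardLang (m : ℕ) : Set (List Bool) :=
  { w | ∀ i ∈ reqSet m w.length, w.getD i false = true }

/-- the checking automaton -/
def checkDFA : DFA (Bool × Bool) Bool where
  step := fun q c => q && (!c.2 || c.1)
  start := true
  accept := {true}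

lemma checkDFA_evalFrom (l : List (Bool × Bool)) :
    ∀ q, checkDFA.evalFrom q l = (q && l.all (fun c => !c.2 || c.1)) := by
  induction l with
  | nil => intro q; simp [DFA.evalFrom]
  | cons c l ih =>
    intro q
    have : checkDFA.evalFrom q (c :: l) = checkDFA.evalFrom (checkDFA.step q c) l := rfl
    rw [this, ih]
    simp [checkDFA, Bool.and_assoc]

lemma checkDFA_accepts (w : List Bool) (S : Finset ℕ) (hS : ∀ i ∈ S, i < w.length) :
    markWord w S ∈ checkDFA.accepts ↔ ∀ i ∈ S, w.getD i false = true := by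
  rw [DFA.mem_accepts]
  have : checkDFA.eval (markWord w S) = (markWord w S).all (fun c => !c.2 || c.1) := by
    have := checkDFA_evalFrom (markWord w S) checkDFA.start
    simpa [checkDFA, DFA.eval] using this
  rw [show (checkDFA.eval (markWord w S) ∈ checkDFA.accept) ↔
      (checkDFA.eval (markWord w S) = true) by simp [checkDFA], this,
    markWord_eq_range_map w S false]
  simp only [List.all_eq_true]
  constructor
  · intro H i hi
    have hm : (w.getD i false, decide (i ∈ S)) ∈
        (List.range w.length).map (fun i => (w.getD i false, decide (i ∈ S))) :=
      List.mem_map_of_mem (List.mem_range.mpr (hS i hi))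
    have := H _ hm
    simpa [hi] using this
  · intro H c hc
    obtain ⟨i, hi, rfl⟩ := List.mem_map.mp hc
    by_cases h : i ∈ S
    · simpa [h] using H i h
    · simp [h]

lemma hardLang_upper (m : ℕ) : RecognizedWithInkdots (hardLang m) (fun _ => m) := by
  refine ⟨Bool, inferInstance, checkDFA, reqSet m, ?_, ?_, ?_⟩
  · intro n i hi
    exact (Finset.mem_filter.mp hi).2
  · intro n
    calc (reqSet m n).card ≤ ((Finset.range m).image
          fun k => (k+1) * (n / (m+1))).card := Finset.card_filter_le _ _
      _ ≤ (Finset.range m).card := Finset.card_image_le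
      _ = m := Finset.card_range m
  · intro w
    rw [checkDFA_accepts w (reqSet m w.length) (fun i hi => (Finset.mem_filter.mp hi).2)]
    rfl

lemma eval_flip {σ : Type*} (M : DFA (Bool × Bool) σ) (S : Finset ℕ) (n a e j : ℕ)
    (hja : a ≤ j) (hje : j ≤ e) (hen : e + 1 ≤ n)
    (hfreeS : ∀ i ∈ S, ¬ (a ≤ i ∧ i ≤ e)) :
    M.eval (markWord ((List.range n).map fun i => decide (i ≠ j)) S)
      = M.evalFrom
          ((fun q => M.step q (true, false))^[e - j]
            (M.step ((fun q => M.step q (true, false))^[j - a]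
              (M.evalFrom M.start
                ((List.range' 0 a).map fun i => ((true : Bool), decide (i ∈ S)))))
              (false, false)))
          ((List.range' (e+1) (n - (e+1))).map fun i => ((true : Bool), decide (i ∈ S))) := by
  have hlen : ((List.range n).map fun i => decide (i ≠ j)).length = n := by simp
  have hmark : markWord ((List.range n).map fun i => decide (i ≠ j)) S
      = (List.range n).map (fun i => (decide (i ≠ j), decide (i ∈ S))) := by
    rw [markWord_eq_range_map _ S true, hlen]
    apply List.map_congr_left
    intro i hi
    have hi' : i < n := List.mem_range.mp hi
    have hg : ((List.range n).map fun i => decide (i ≠ j)).getD i true = decide (i ≠ j) := by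
      rw [List.getD_eq_getElem _ _ (by simpa using hi')]
      simp
    rw [hg]
  have h1 : List.range' 0 a ++ List.range' a (j - a) = List.range' 0 j := by
    rw [range'_glue]; congr 1; omega
  have h2 : List.range' 0 j ++ [j] = List.range' 0 (j+1) := by
    rw [show ([j] : List ℕ) = List.range' j 1 from List.range'_one.symm, range'_glue]
  have h3 : List.range' 0 (j+1) ++ List.range' (j+1) (e - j) = List.range' 0 (e+1) := by
    rw [range'_glue]; congr 1; omega
  have h4 : List.range' 0 (e+1) ++ List.range' (e+1) (n - (e+1)) = List.range' 0 n := by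
    rw [range'_glue]; congr 1; omega
  have hsplit : List.range n
      = ((((List.range' 0 a ++ List.range' a (j - a)) ++ [j]) ++ List.range' (j+1) (e - j))
          ++ List.range' (e+1) (n - (e+1))) := by
    rw [List.range_eq_range', ← h4, ← h3, ← h2, ← h1]
  rw [hmark, hsplit]
  simp only [List.map_append, DFA.eval, DFA.evalFrom_of_append]
  -- prefix
  have hpre : (List.range' 0 a).map (fun i => (decide (i ≠ j), decide (i ∈ S)))
      = (List.range' 0 a).map (fun i => ((true : Bool), decide (i ∈ S))) := by
    apply List.map_congr_left
    intro i hi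
    have := List.mem_range'_1.mp hi
    have : i ≠ j := by omega
    simp [this]
  rw [hpre]
  -- middle 1
  have hmid1 : M.evalFrom (M.evalFrom M.start
        ((List.range' 0 a).map fun i => ((true : Bool), decide (i ∈ S))))
        ((List.range' a (j - a)).map (fun i => (decide (i ≠ j), decide (i ∈ S))))
      = (fun q => M.step q (true, false))^[j - a]
        (M.evalFrom M.start ((List.range' 0 a).map fun i => ((true : Bool), decide (i ∈ S)))) := by
    apply evalFrom_range'_const
    intro i hi1 hi2
    have hij : i ≠ j := by omega
    have hiS : i ∉ S := fun hiS => hfreeS i hiS ⟨hi1, by omega⟩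
    simp [hij, hiS]
  rw [hmid1]
  -- single
  have hjS : j ∉ S := fun hjS => hfreeS j hjS ⟨hja, hje⟩
  have hsing : M.evalFrom ((fun q => M.step q (true, false))^[j - a]
        (M.evalFrom M.start ((List.range' 0 a).map fun i => ((true : Bool), decide (i ∈ S)))))
        ([j].map (fun i => (decide (i ≠ j), decide (i ∈ S))))
      = M.step ((fun q => M.step q (true, false))^[j - a]
          (M.evalFrom M.start ((List.range' 0 a).map fun i => ((true : Bool), decide (i ∈ S)))))
          (false, false) := by
    simp [hjS, DFA.evalFrom]
  rw [hsing]
  -- middle 2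
  have hmid2 : M.evalFrom (M.step ((fun q => M.step q (true, false))^[j - a]
        (M.evalFrom M.start ((List.range' 0 a).map fun i => ((true : Bool), decide (i ∈ S)))))
        (false, false))
        ((List.range' (j+1) (e - j)).map (fun i => (decide (i ≠ j), decide (i ∈ S))))
      = (fun q => M.step q (true, false))^[e - j]
        (M.step ((fun q => M.step q (true, false))^[j - a]
          (M.evalFrom M.start ((List.range' 0 a).map fun i => ((true : Bool), decide (i ∈ S)))))
          (false, false)) := by
    apply evalFrom_range'_const
    intro i hi1 hi2
    have hij : i ≠ j := by omega
    have hiS : i ∉ S := fun hiS => hfreeS i hiS ⟨by omega, by omega⟩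
    simp [hij, hiS]
  rw [hmid2]
  -- suffix
  congr 1
  apply List.map_congr_left
  intro i hi
  have := List.mem_range'_1.mp hi
  have : i ≠ j := by omega
  simp [this]

lemma hardLang_lower (m : ℕ) (hm : 0 < m) :
    ¬ RecognizedWithInkdots (hardLang m) (fun _ => m - 1) := by
  rintro ⟨σ, inst, M, h, hlt, hcard, hcorr⟩
  haveI := inst
  set f := fun q : σ => M.step q (true, false) with hf
  obtain ⟨N, per, hper0, hper⟩ := exists_iterate_period f
  set B := N + per with hBdef
  set t := 2 * B + 2 with htdef
  set n := (m+1) * t with hndef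
  have hdiv : n / (m+1) = t := Nat.mul_div_cancel_left t (by omega)
  set S := h n with hSdef
  -- pigeonhole: some window of radius B around a required position is unmarked
  have hwin : ∃ k, k < m ∧ ∀ i ∈ S, ¬ ((k+1)*t - B ≤ i ∧ i ≤ (k+1)*t + B) := by
    by_contra hcon
    push_neg at hcon
    have hcon' : ∀ k : Fin m, ∃ i, i ∈ S ∧
        ((k:ℕ)+1)*t - B ≤ i ∧ i ≤ ((k:ℕ)+1)*t + B := by
      intro k
      obtain ⟨i, hiS, hi⟩ := hcon k k.2
      exact ⟨i, hiS, hi⟩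
    choose c hcS hc1 hc2 using hcon'
    have hone : ∀ (x y : Fin m), c x = c y → (x:ℕ) ≤ y := by
      intro x y hxy
      have h1 : ((x:ℕ)+1)*t ≤ c x + B := by have := hc1 x; omega
      have h2 : c y ≤ ((y:ℕ)+1)*t + B := hc2 y
      have h3 : ((x:ℕ)+1)*t ≤ ((y:ℕ)+1)*t + 2*B := by rw [hxy] at h1; omega
      have hlt : ((x:ℕ)+1)*t < ((y:ℕ)+2)*t := by
        calc ((x:ℕ)+1)*t ≤ ((y:ℕ)+1)*t + 2*B := h3
          _ < ((y:ℕ)+1)*t + t := by omega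
          _ = ((y:ℕ)+2)*t := by ring
      have := Nat.lt_of_mul_lt_mul_right hlt
      omega
    have hinj : Function.Injective c := by
      intro x y hxy
      have h1 := hone x y hxy
      have h2 := hone y x hxy.symm
      exact Fin.ext (by omega)
    have hm' : m ≤ S.card := by
      have := Finset.card_le_card_of_injOn (s := Finset.univ) (t := S) c
        (fun x _ => hcS x) hinj.injOn
      simpa using this
    have hc : S.card ≤ m - 1 := by simpa [hSdef] using hcard n
    omega
  obtain ⟨k, hkm, hfree⟩ := hwin
  set p := (k+1)*t with hpdef
  have htp : t ≤ p := by
    have : 1*t ≤ (k+1)*t := Nat.mul_le_mul_right t (by omega)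
    omega
  set a := p - B with hadef
  set e := p + B with hedef
  have hen : e + 1 ≤ n := by
    have h1 : (k+1)*t ≤ m*t := Nat.mul_le_mul_right t (by omega)
    have h2 : m*t + t = n := by rw [hndef]; ring
    omega
  have hfreeS : ∀ i ∈ S, ¬ (a ≤ i ∧ i ≤ e) := by
    intro i hiS hi
    exact hfree i hiS ⟨by omega, by omega⟩
  -- the two words
  have hkey := fun (j : ℕ) (hja : a ≤ j) (hje : j ≤ e) =>
    eval_flip M S n a e j hja hje hen hfreeS
  have hstate : M.eval (markWord ((List.range n).map fun i => decide (i ≠ p)) S)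
      = M.eval (markWord ((List.range n).map fun i => decide (i ≠ (p + per))) S) := by
    rw [hkey p (by omega) (by omega), hkey (p + per) (by omega) (by omega)]
    have e1 : e - p = B := by omega
    have e2 : p - a = B := by omega
    have e3 : (p + per) - a = B + per := by omega
    have e4 : e - (p + per) = N := by omega
    rw [e1, e2, e3, e4, ← hf]
    generalize M.evalFrom M.start
      ((List.range' 0 a).map fun i => ((true : Bool), decide (i ∈ S))) = q1
    have hy1 : f^[B + per] q1 = f^[B] q1 := by rw [hper B (by omega)]
    rw [hy1]
    have hy2 : f^[B] = f^[N] := by rw [hBdef]; exact hper N le_rfl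
    rw [hy2]
  -- membership facts
  have hlen : ∀ j : ℕ, ((List.range n).map fun i => decide (i ≠ j)).length = n := by
    intro j; simp
  have hgetD : ∀ (j i : ℕ), i < n →
      ((List.range n).map fun x => decide (x ≠ j)).getD i false = decide (i ≠ j) := by
    intro j i hi
    rw [List.getD_eq_getElem _ _ (by simpa using hi)]
    simp
  have hw1 : ((List.range n).map fun i => decide (i ≠ p)) ∉ hardLang m := by
    intro hmem
    have hpreq : p ∈ reqSet m n := by
      rw [reqSet, Finset.mem_filter]
      constructor
      · exact Finset.mem_image.mpr ⟨k, Finset.mem_range.mpr hkm, by rw [hdiv]⟩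
      · simpa using by omega
    have := hmem p (by rwa [hlen p])
    rw [hgetD p p (by omega)] at this
    simp at this
  have hw2 : ((List.range n).map fun i => decide (i ≠ (p + per))) ∈ hardLang m := by
    intro i hi
    rw [hlen] at hi
    obtain ⟨himg, hiln⟩ := Finset.mem_filter.mp hi
    obtain ⟨k', hk'm, hk'⟩ := Finset.mem_image.mp himg
    rw [hdiv] at hk'
    have hk'm' : k' < m := Finset.mem_range.mp hk'm
    have hiln' : i < n := by simpa using hiln
    rw [hgetD _ i hiln']
    have : i ≠ p + per := by
      intro hip
      rcases le_or_gt k' k with hc | hc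
      · have : (k'+1)*t ≤ (k+1)*t := Nat.mul_le_mul_right t (by omega)
        omega
      · have : (k+2)*t ≤ (k'+1)*t := Nat.mul_le_mul_right t (by omega)
        have h2t : (k+2)*t = (k+1)*t + t := by ring
        omega
    simp [this]
  -- contradiction
  have hc1 := hcorr ((List.range n).map fun i => decide (i ≠ p))
  have hc2 := hcorr ((List.range n).map fun i => decide (i ≠ (p + per)))
  rw [hlen] at hc1 hc2
  rw [DFA.mem_accepts] at hc1 hc2
  rw [hSdef] at hstate
  exact hw1 (hc1.mpr (by rw [hstate]; exact hc2.mp hw2))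


/-- `REG/(m-1)(⊙) ⊊ REG/m(⊙)` over the alphabet `{0,1}`. -/
theorem inkdot_constant_hierarchy (m : ℕ) (hm : 0 < m) :
    (∀ L : Set (List Bool),
        RecognizedWithInkdots L (fun _ => m - 1) → RecognizedWithInkdots L (fun _ => m)) ∧
    ∃ L : Set (List Bool),
      RecognizedWithInkdots L (fun _ => m) ∧ ¬ RecognizedWithInkdots L (fun _ => m - 1) := by
  constructor
  · rintro L ⟨σ, i, M, h, h1, h2, h3⟩
    exact ⟨σ, i, M, h, h1, fun n => le_trans (h2 n) (Nat.sub_le m 1), h3⟩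
  · exact ⟨hardLang m, hardLang_upper m, hardLang_lower m hm⟩
end

section
/- Let f, g : ℕ → ℕ be functions such that f(n) tends to infinity, f(n)/n tends to 0, and there exists n₀ such that g(n) + 2 < f(n) for all n > n₀. Then the class REG/g(n)(⊙) of languages over {0,1} recognized by a deterministic finite automaton with at most g(n) inkdots of advice on inputs of length n is strictly contained in the class REG/f(n)(⊙) of languages recognized by a deterministic finite automaton with at most f(n) inkdots of advice on inputs of length n. -/
@[simp] lemma markWord_length {α : Type*} (w : List α) (S : Finset ℕ) :
    (markWord w S).length = w.length := by
  simp [markWord]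

lemma mem_markWord {α : Type*} {w : List α} {S : Finset ℕ} {a : α} {b : Bool} :
    (a, b) ∈ markWord w S ↔ ∃ i, ∃ h : i < w.length, w[i] = a ∧ decide (i ∈ S) = b := by
  simp only [markWord, List.mem_map, Prod.mk.injEq]
  constructor
  · rintro ⟨⟨x, i⟩, hm, h1, h2⟩
    obtain ⟨hi, hx⟩ := List.mem_zipIdx' hm
    exact ⟨i, hi, by rw [← h1, hx], h2⟩
  · rintro ⟨i, hi, hx, hb⟩
    exact ⟨(w[i], i), by rw [List.mk_mem_zipIdx_iff_getElem?]; simp [hi], hx, hb⟩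

lemma markWord_getElem {α : Type*} {w : List α} {S : Finset ℕ} {i : ℕ}
    (h : i < (markWord w S).length) :
    (markWord w S)[i] = (w[i]'(by simpa using h), decide (i ∈ S)) := by
  simp [markWord]

/-- The DFA used on the positive side: accepts iff some symbol is marked and
every marked symbol carries letter `true`. -/
def posDFA : DFA (Bool × Bool) (Fin 3) where
  step := fun s p => if s = 2 then 2 else if p.2 then (if p.1 then 1 else 2) else s
  start := 0
  accept := {1}

lemma posDFA_eval (l : List (Bool × Bool)) :
    posDFA.eval l = if (false, true) ∈ l then 2 else if (true, true) ∈ l then 1 else 0 := by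
  induction l using List.reverseRecOn with
  | nil => simp [posDFA, DFA.eval, DFA.evalFrom]
  | append_singleton l x ih =>
      rcases x with ⟨a, b⟩
      have : posDFA.eval (l ++ [(a, b)]) = posDFA.step (posDFA.eval l) (a, b) :=
        DFA.evalFrom_append_singleton _ _ _ _
      rw [this, ih]
      cases a <;> cases b <;> by_cases h1 : (false, true) ∈ l <;>
        by_cases h2 : (true, true) ∈ l <;> simp [posDFA, h1, h2]

lemma posDFA_accepts (l : List (Bool × Bool)) :
    l ∈ posDFA.accepts ↔ (false, true) ∉ l ∧ (true, true) ∈ l := by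
  rw [DFA.mem_accepts, posDFA_eval]
  by_cases h1 : (false, true) ∈ l <;> by_cases h2 : (true, true) ∈ l <;>
    simp [posDFA, h1, h2]

lemma posDFA_accepts_markWord {w : List Bool} {S : Finset ℕ}
    (hS : ∀ i ∈ S, i < w.length) (hne : S.Nonempty) :
    markWord w S ∈ posDFA.accepts ↔ ∀ i ∈ S, w.getD i false = true := by
  rw [posDFA_accepts]
  constructor
  · rintro ⟨hno, -⟩ i hi
    have hil := hS i hi
    rw [List.getD_eq_getElem _ _ hil]
    by_contra hfalse
    exact hno (mem_markWord.2 ⟨i, hil, by simpa using hfalse, by simp [hi]⟩)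
  · intro hall
    constructor
    · intro hmem
      obtain ⟨i, hi, hx, hb⟩ := mem_markWord.1 hmem
      have : i ∈ S := by simpa using hb
      have := hall i this
      rw [List.getD_eq_getElem _ _ hi] at this
      simp [hx] at this
    · obtain ⟨i, hi⟩ := hne
      have hil := hS i hi
      have := hall i hi
      rw [List.getD_eq_getElem _ _ hil] at this
      exact mem_markWord.2 ⟨i, hil, this, by simp [hi]⟩

open Finset in
lemma core_counting {τ : Type*} (M : DFA (Bool × Bool) τ) {n fn gn : ℕ}
    (h1 : gn + 2 < fn) (h2 : gn + 2 < n) :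
    ∃ S : Finset ℕ, (∀ i ∈ S, i < n) ∧ S.Nonempty ∧ S.card ≤ fn ∧
      ∀ T : Finset ℕ, (∀ i ∈ T, i < n) → T.card ≤ gn →
        ∃ w : List Bool, w.length = n ∧
          ¬ ((∀ i ∈ S, w.getD i false = true) ↔ markWord w T ∈ M.accepts) := by
  classical
  set V := Fin n → Bool with hV
  set A : Finset (Fin n) → Finset V :=
    fun S => univ.filter (fun v => ∀ i ∈ S, v i = true) with hA
  set B : Finset (Fin n) → Finset V :=
    fun T => univ.filter (fun v => markWord (List.ofFn v) (T.image Fin.val) ∈ M.accepts) with hB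
  have hAmem : ∀ (S : Finset (Fin n)) (v : V), v ∈ A S ↔ ∀ i ∈ S, v i = true := by
    intro S v; simp [hA]
  have hBmem : ∀ (T : Finset (Fin n)) (v : V),
      v ∈ B T ↔ markWord (List.ofFn v) (T.image Fin.val) ∈ M.accepts := by
    intro T v; simp [hB]
  have hAsub : ∀ S S' : Finset (Fin n), A S = A S' → S' ⊆ S := by
    intro S S' h j hj
    have hv : (fun i => decide (i ∈ S) : V) ∈ A S := by
      rw [hAmem]; intro i hi; simp [hi]
    rw [h, hAmem] at hv
    simpa using hv j hj
  have hAinj : Function.Injective A := fun S S' h =>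
    Finset.Subset.antisymm (hAsub S' S h.symm) (hAsub S S' h)
  set C : ℕ → Finset (Finset (Fin n)) :=
    fun b => univ.filter (fun S => S.card ≤ b) with hC
  have hCmem : ∀ b (S : Finset (Fin n)), S ∈ C b ↔ S.card ≤ b := by
    intro b S; simp [hC]
  obtain ⟨X, -, hX⟩ := Finset.exists_subset_card_eq
    (show gn + 1 ≤ (univ : Finset (Fin n)).card by simp; omega)
  obtain ⟨Y, -, hY⟩ := Finset.exists_subset_card_eq
    (show gn + 2 ≤ (univ : Finset (Fin n)).card by simp; omega)
  have hXY : X ≠ Y := fun h => by rw [h, hY] at hX; omega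
  have hXC : X ∉ C gn := by rw [hCmem]; omega
  have hYC : Y ∉ C gn := by rw [hCmem]; omega
  have hsub2 : insert X (insert Y (C gn)) ⊆ C (gn + 2) := by
    intro S hS
    rw [hCmem]
    rcases Finset.mem_insert.1 hS with h | h
    · subst h; omega
    · rcases Finset.mem_insert.1 h with h' | h'
      · subst h'; omega
      · have := (hCmem _ _).1 h'; omega
  have hcard2 : (C gn).card + 2 ≤ (C (gn + 2)).card := by
    have h' := Finset.card_le_card hsub2
    rwa [Finset.card_insert_of_notMem (by simp [hXY, hXC]),
      Finset.card_insert_of_notMem hYC] at h'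
  set 𝒮 : Finset (Finset (Fin n)) := (C (gn + 2)).erase ∅ with h𝒮
  have hScard : (C gn).card < 𝒮.card := by
    have hemp : (∅ : Finset (Fin n)) ∈ C (gn + 2) := by rw [hCmem]; simp
    rw [h𝒮, Finset.card_erase_of_mem hemp]
    omega
  have himg : ¬ (𝒮.image A ⊆ (C gn).image B) := by
    intro hsub
    have := Finset.card_le_card hsub
    rw [Finset.card_image_of_injective _ hAinj] at this
    have := Finset.card_image_le (s := C gn) (f := B)
    omega
  obtain ⟨x, hx𝒮, hxB⟩ := Finset.not_subset.1 himg
  obtain ⟨S0, hS0, rfl⟩ := Finset.mem_image.1 hx𝒮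
  refine ⟨S0.image Fin.val, ?_, ?_, ?_, ?_⟩
  · intro i hi
    obtain ⟨j, -, rfl⟩ := Finset.mem_image.1 hi
    exact j.2
  · exact (Finset.nonempty_of_ne_empty (Finset.ne_of_mem_erase hS0)).image _
  · rw [Finset.card_image_of_injective _ Fin.val_injective]
    have := (hCmem _ _).1 (Finset.mem_of_mem_erase hS0)
    omega
  · intro T hT hTc
    set T0 : Finset (Fin n) := T.attachFin hT with hT0
    have hT0img : T0.image Fin.val = T := by
      ext j
      simp only [Finset.mem_image, hT0, Finset.mem_attachFin]
      constructor
      · rintro ⟨a, ha, rfl⟩; exact ha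
      · intro hj; exact ⟨⟨j, hT j hj⟩, hj, rfl⟩
    have hT0C : T0 ∈ C gn := by
      rw [hCmem, hT0, Finset.card_attachFin]; exact hTc
    have hne : A S0 ≠ B T0 := by
      intro h
      exact hxB (Finset.mem_image.2 ⟨T0, hT0C, h.symm⟩)
    have hv : ∃ v : V, ¬ (v ∈ A S0 ↔ v ∈ B T0) := by
      by_contra hall
      push_neg at hall
      exact hne (Finset.ext fun v => (hall v))
    obtain ⟨v, hv⟩ := hv
    refine ⟨List.ofFn v, List.length_ofFn (f := v), ?_⟩
    intro hiff
    apply hv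
    rw [hAmem, hBmem, hT0img]
    rw [← hiff]
    constructor
    · intro hall i hi
      obtain ⟨j, hj, rfl⟩ := Finset.mem_image.1 hi
      rw [List.getD_eq_getElem _ _ (by simp [j.2]), List.getElem_ofFn, Fin.eta]
      exact hall j hj
    · intro hall i hi
      have h' := hall i.val (Finset.mem_image_of_mem _ hi)
      rw [List.getD_eq_getElem _ _ (by simp [i.2])] at h'
      rwa [List.getElem_ofFn, Fin.eta] at h' 

/-- Canonical codes for DFAs over `Bool × Bool` with states `Fin m`. -/
def DFACode : Type := Σ m : ℕ, (Fin m → (Bool × Bool) → Fin m) × Fin m × (Fin m → Bool)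

def DFACode.toDFA (d : DFACode) : DFA (Bool × Bool) (Fin d.1) :=
  ⟨d.2.1, d.2.2.1, {s | d.2.2.2 s = true}⟩

instance : Countable DFACode := by unfold DFACode; infer_instance

instance : Nonempty DFACode := ⟨⟨1, fun _ _ => 0, 0, fun _ => false⟩⟩

lemma exists_code {σ : Type} [Fintype σ] (M : DFA (Bool × Bool) σ) :
    ∃ d : DFACode, ∀ l, l ∈ M.accepts ↔ l ∈ d.toDFA.accepts := by
  classical
  set m := Fintype.card σ with hm
  set e := Fintype.equivFin σ with he
  refine ⟨⟨m, fun s a => e (M.step (e.symm s) a), e M.start,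
    fun s => decide (e.symm s ∈ M.accept)⟩, ?_⟩
  set d : DFACode := ⟨m, fun s a => e (M.step (e.symm s) a), e M.start,
    fun s => decide (e.symm s ∈ M.accept)⟩ with hd
  have key : ∀ (l : List (Bool × Bool)) (s : σ),
      d.toDFA.evalFrom (e s) l = e (M.evalFrom s l) := by
    intro l
    induction l with
    | nil => intro s; simp [DFA.evalFrom]
    | cons a l ih =>
        intro s
        show d.toDFA.evalFrom (d.toDFA.step (e s) a) l = e (M.evalFrom (M.step s a) l)
        rw [show d.toDFA.step (e s) a = e (M.step s a) by
          simp [hd, d, DFACode.toDFA]]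
        exact ih (M.step s a)
  intro l
  rw [DFA.mem_accepts, DFA.mem_accepts]
  show M.eval l ∈ M.accept ↔ d.toDFA.eval l ∈ d.toDFA.accept
  have : d.toDFA.eval l = e (M.eval l) := key l M.start
  rw [this]
  simp [DFACode.toDFA, hd, d]

section Tracker
variable {σ : Type} (M : DFA (Bool × Bool) σ) (n₀ : ℕ) (L : Set (List Bool))

/-- tracker update -/
def trackStep (t : Fin (n₀ + 2) × (Fin (n₀ + 1) → Bool)) (a : Bool) :
    Fin (n₀ + 2) × (Fin (n₀ + 1) → Bool) :=
  if hm : (t.1 : ℕ) < n₀ + 1 then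
    (⟨t.1 + 1, by omega⟩, Function.update t.2 ⟨t.1, hm⟩ a) else t

def trackDecode (t : Fin (n₀ + 2) × (Fin (n₀ + 1) → Bool)) : List Bool :=
  List.ofFn (fun i : Fin (min (t.1 : ℕ) (n₀ + 1)) => t.2 ⟨i, by omega⟩)

open Classical in
/-- the machine simulating `M` while recording a bounded prefix. -/
noncomputable def bigDFA : DFA (Bool × Bool) (σ × Fin (n₀ + 2) × (Fin (n₀ + 1) → Bool)) where
  step := fun q x => (M.step q.1 x, trackStep n₀ q.2 x.1)
  start := (M.start, ⟨0, by omega⟩, fun _ => false)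
  accept := {q | if (q.2.1 : ℕ) ≤ n₀ then trackDecode n₀ q.2 ∈ L else q.1 ∈ M.accept}

lemma bigDFA_eval (l : List (Bool × Bool)) :
    (bigDFA M n₀ L).eval l =
      (M.eval l, (⟨min l.length (n₀ + 1), by omega⟩ : Fin (n₀ + 2)),
        fun (i : Fin (n₀ + 1)) =>
          if hi : (i : ℕ) < l.length then (l[(i : ℕ)]).1 else false) := by
  induction l using List.reverseRecOn with
  | nil =>
      simp only [DFA.eval, DFA.evalFrom, List.foldl_nil]
      refine Prod.ext rfl (Prod.ext (by simp [bigDFA]) ?_)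
      funext i
      simp [bigDFA]
  | append_singleton l x ih =>
      have h1 : (bigDFA M n₀ L).eval (l ++ [x]) =
          (bigDFA M n₀ L).step ((bigDFA M n₀ L).eval l) x :=
        DFA.evalFrom_append_singleton _ _ _ _
      have h2 : M.eval (l ++ [x]) = M.step (M.eval l) x :=
        DFA.evalFrom_append_singleton _ _ _ _
      rw [h1, ih, h2]
      refine Prod.ext rfl ?_
      show trackStep n₀ _ x.1 = _
      simp only [List.length_append, List.length_singleton]
      by_cases hc : l.length < n₀ + 1
      · rw [trackStep, dif_pos (by simpa using hc)]
        refine Prod.ext (by apply Fin.ext; simp; omega) ?_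
        funext i
        dsimp only
        rw [Function.update_apply]
        by_cases hi : (i : ℕ) = l.length
        · rw [if_pos (Fin.ext (by simp [hi]; omega)), dif_pos (by omega)]
          simp [hi]
        · rw [if_neg (by intro hh; apply hi; rw [hh]; simp; omega)]
          by_cases hlt : (i : ℕ) < l.length
          · rw [dif_pos hlt, dif_pos (by omega), List.getElem_append_left hlt]
          · rw [dif_neg hlt, dif_neg (by omega)]
      · rw [trackStep, dif_neg (by simp; omega)]
        refine Prod.ext (by apply Fin.ext; simp; omega) ?_
        funext i
        have hi1 : (i : ℕ) < l.length := by omega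
        dsimp only
        rw [dif_pos hi1, dif_pos (by omega), List.getElem_append_left hi1]

end Tracker

lemma bigDFA_accepts_short {σ : Type} (M : DFA (Bool × Bool) σ) (n₀ : ℕ)
    (L : Set (List Bool)) (w : List Bool) (S : Finset ℕ) (hw : w.length ≤ n₀) :
    (markWord w S ∈ (bigDFA M n₀ L).accepts) = (w ∈ L) := by
  rw [DFA.mem_accepts, bigDFA_eval]
  have hl : (markWord w S).length = w.length := by simp
  have hcond : ((⟨min (markWord w S).length (n₀ + 1), by omega⟩ : Fin (n₀ + 2)) : ℕ) ≤ n₀ := by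
    simp [hl]; omega
  simp only [bigDFA, Set.mem_setOf_eq, hcond, if_true]
  congr 1
  rw [trackDecode]
  refine List.ext_getElem (by simp; omega) ?_
  intro i hi hi'
  have hiw : i < w.length := by simp at hi; omega
  simp only [List.getElem_ofFn]
  rw [dif_pos (by simp [hl]; omega)]
  rw [markWord_getElem]

lemma bigDFA_accepts_long {σ : Type} (M : DFA (Bool × Bool) σ) (n₀ : ℕ)
    (L : Set (List Bool)) (w : List Bool) (S : Finset ℕ) (hw : n₀ < w.length) :
    (markWord w S ∈ (bigDFA M n₀ L).accepts) = (markWord w S ∈ M.accepts) := by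
  rw [DFA.mem_accepts, DFA.mem_accepts, bigDFA_eval]
  have hl : (markWord w S).length = w.length := by simp
  have hcond : ¬ ((⟨min (markWord w S).length (n₀ + 1), by omega⟩ : Fin (n₀ + 2)) : ℕ) ≤ n₀ := by
    simp [hl]; omega
  simp only [bigDFA, Set.mem_setOf_eq, hcond, if_false]

lemma recognized_mono {L : Set (List Bool)} {a b : ℕ → ℕ} (n₀ : ℕ)
    (hab : ∀ n, n₀ < n → a n ≤ b n) :
    RecognizedWithInkdots L a → RecognizedWithInkdots L b := by
  rintro ⟨σ, inst, M, h, hpos, hcard, hmem⟩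
  classical
  refine ⟨σ × Fin (n₀ + 2) × (Fin (n₀ + 1) → Bool), inferInstance, bigDFA M n₀ L,
    fun n => if n₀ < n then h n else ∅, ?_, ?_, ?_⟩
  · intro n i hi
    dsimp only at hi
    split_ifs at hi with hn
    · exact hpos n i hi
    · simp at hi
  · intro n
    dsimp only
    split_ifs with hn
    · exact (hcard n).trans (hab n hn)
    · simp
  · intro w
    dsimp only
    by_cases hc : n₀ < w.length
    · rw [if_pos hc, bigDFA_accepts_long M n₀ L w (h w.length) hc]
      exact hmem w
    · rw [if_neg hc, bigDFA_accepts_short M n₀ L w ∅ (by omega)]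


open Filter in
/-- if `f ∈ ω(1) ∩ o(n)` and `g(n) + 2 < f(n)` for all sufficiently
large `n`, then `REG/g(n)(⊙) ⊊ REG/f(n)(⊙)` over the alphabet `{0,1}`. -/
theorem inkdot_function_hierarchy (f g : ℕ → ℕ)
    (hf1 : Tendsto f atTop atTop)
    (hf2 : Tendsto (fun n => (f n : ℝ) / n) atTop (nhds 0))
    (hg : ∃ n₀ : ℕ, ∀ n > n₀, g n + 2 < f n) :
    (∀ L : Set (List Bool),
        RecognizedWithInkdots L g → RecognizedWithInkdots L f) ∧
    ∃ L : Set (List Bool),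
      RecognizedWithInkdots L f ∧ ¬ RecognizedWithInkdots L g := by
  classical
  obtain ⟨n₀, hn₀⟩ := hg
  have hev : ∀ᶠ n in atTop, (f n : ℝ) / n < 1 :=
    hf2.eventually_lt_const (by norm_num)
  obtain ⟨N₁, hN₁⟩ := eventually_atTop.1 hev
  have hflt : ∀ n, N₁ ≤ n → 1 ≤ n → f n < n := by
    intro n hn hn1
    have h' := hN₁ n hn
    have hnpos : (0 : ℝ) < (n : ℝ) := by exact_mod_cast hn1
    rw [div_lt_one hnpos] at h'
    exact_mod_cast h'
  set base := max n₀ N₁ with hbase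
  have hkey : ∀ k : ℕ, g (base + k + 1) + 2 < f (base + k + 1) ∧
      g (base + k + 1) + 2 < base + k + 1 := by
    intro k
    have h1 : n₀ < base + k + 1 := by omega
    have h2 := hn₀ _ h1
    have h3 := hflt (base + k + 1) (by omega) (by omega)
    exact ⟨h2, by omega⟩
  obtain ⟨e, he⟩ := exists_surjective_nat DFACode
  have hsel : ∀ k : ℕ, ∃ S : Finset ℕ,
      (∀ i ∈ S, i < base + k + 1) ∧ S.Nonempty ∧ S.card ≤ f (base + k + 1) ∧
      ∀ T : Finset ℕ, (∀ i ∈ T, i < base + k + 1) → T.card ≤ g (base + k + 1) →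
        ∃ w : List Bool, w.length = base + k + 1 ∧
          ¬ ((∀ i ∈ S, w.getD i false = true) ↔
              markWord w T ∈ (e k).toDFA.accepts) :=
    fun k => core_counting (e k).toDFA (hkey k).1 (hkey k).2
  choose S hS1 hS2 hS3 hS4 using hsel
  constructor
  · intro L
    exact recognized_mono n₀ (fun n hn => le_of_lt (by have := hn₀ n hn; omega))
  · refine ⟨{w : List Bool | base < w.length ∧
        ∀ i ∈ S (w.length - base - 1), w.getD i false = true}, ?_, ?_⟩
    · refine ⟨Fin 3, inferInstance, posDFA,
        fun n => if base < n then S (n - base - 1) else ∅, ?_, ?_, ?_⟩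
      · intro n i hi
        dsimp only at hi
        split_ifs at hi with hb
        · have := hS1 (n - base - 1) i hi; omega
        · simp at hi
      · intro n
        dsimp only
        split_ifs with hb
        · have h' := hS3 (n - base - 1)
          rwa [show base + (n - base - 1) + 1 = n from by omega] at h'
        · simp
      · intro w
        dsimp only
        by_cases hb : base < w.length
        · rw [if_pos hb]
          rw [posDFA_accepts_markWord
            (fun i hi => by have := hS1 (w.length - base - 1) i hi; omega)
            (hS2 _)]
          simp only [Set.mem_setOf_eq]
          exact ⟨fun h => h.2, fun h => ⟨hb, h⟩⟩
        · rw [if_neg hb]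
          simp only [Set.mem_setOf_eq]
          constructor
          · rintro ⟨hb', -⟩; exact absurd hb' hb
          · intro hacc
            obtain ⟨-, htt⟩ := (posDFA_accepts _).1 hacc
            obtain ⟨i, hi, -, hdec⟩ := mem_markWord.1 htt
            simp at hdec
    · rintro ⟨σ, inst, M, h, hp1, hp2, hp3⟩
      obtain ⟨d, hd⟩ := exists_code M
      obtain ⟨k, hk⟩ := he d
      set n := base + k + 1 with hn
      obtain ⟨w, hwlen, hbad⟩ := hS4 k (h n) (hp1 n) (hp2 n)
      apply hbad
      have h3 := hp3 w
      rw [hwlen] at h3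
      have h4 : w ∈ {w : List Bool | base < w.length ∧
          ∀ i ∈ S (w.length - base - 1), w.getD i false = true} ↔
          markWord w (h n) ∈ (e k).toDFA.accepts := by
        rw [hk, h3]; exact hd _
      rw [← h4]
      simp only [Set.mem_setOf_eq, hwlen]
      rw [show n - base - 1 = k from by omega]
      simp [show base < n from by omega]
end

section
/- Let f : ℕ → ℕ satisfy f(n) ≥ 1 for n ≥ 1, f(n) tends to infinity, and f(n)/n tends to 0, and set f'(n) = ⌈n/f(n)⌉. Then the language L_f = { w ∈ {0,1}^n : n ∈ ℕ, and for all 1 ≤ i ≤ n, the i-th symbol of w is 1 iff i is a positive multiple of f'(n) } is recognized by a deterministic finite automaton with at most f(n) inkdots of advice on inputs of length n. -/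
/-- The language `L_f`: a word `w` of length `n` over `{0,1}` is a member iff for
every position `i` with `1 ≤ i ≤ n`, the `i`-th symbol of `w` (1-based) is `1`
exactly when `i` is a positive multiple of `f' n` (`false` plays the role of `0`
and `true` the role of `1`). -/
def Lf (f' : ℕ → ℕ) : Set (List Bool) :=
  { w | ∀ i : ℕ, 1 ≤ i → i ≤ w.length →
      (w.getD (i - 1) false = true ↔ ∃ k : ℕ, 0 < k ∧ i = k * f' w.length) }

def eqDFA : DFA (Bool × Bool) Bool :=
  ⟨fun s p => s && (p.1 == p.2), true, {true}⟩

lemma eqDFA_evalFrom (l : List (Bool × Bool)) (s : Bool) :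
    eqDFA.evalFrom s l = (s && l.all (fun p => p.1 == p.2)) := by
  induction l generalizing s with
  | nil => simp [DFA.evalFrom, eqDFA]
  | cons a t ih =>
      simp only [DFA.evalFrom, List.foldl_cons] at *
      rw [ih]
      simp [eqDFA, Bool.and_assoc]

lemma eqDFA_accepts (l : List (Bool × Bool)) :
    l ∈ eqDFA.accepts ↔ ∀ p ∈ l, p.1 = p.2 := by
  change eqDFA.evalFrom eqDFA.start l ∈ eqDFA.accept ↔ _
  rw [eqDFA_evalFrom]
  simp [eqDFA, List.all_eq_true]

open Filter in
/-- for `f ∈ ω(1) ∩ o(n)` with `f(n) ≥ 1` for `n ≥ 1`, the language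
`L_f` (with `f'(n) = ⌈n / f(n)⌉`) is recognized with at most `f(n)` inkdots of advice. -/
theorem Lf_mem_inkdots (f : ℕ → ℕ)
    (hf0 : ∀ n, 1 ≤ n → 1 ≤ f n)
    (hf1 : Tendsto f atTop atTop)
    (hf2 : Tendsto (fun n => (f n : ℝ) / n) atTop (nhds 0)) :
    RecognizedWithInkdots (Lf (fun n => n ⌈/⌉ f n)) f := by
  set c : ℕ → ℕ := fun n => n ⌈/⌉ f n with hc
  have hcpos : ∀ n, 1 ≤ n → 0 < c n := by
    intro n hn
    have := hf0 n hn
    have h1 : n ≤ f n • c n := le_smul_ceilDiv (by omega)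
    simp only [smul_eq_mul] at h1
    by_contra h
    simp only [not_lt, Nat.le_zero] at h
    rw [h, mul_zero] at h1
    omega
  refine ⟨Bool, inferInstance, eqDFA,
    fun n => (Finset.range n).filter (fun j => (j + 1) % c n = 0), ?_, ?_, ?_⟩
  · intro n i hi
    simp only [Finset.mem_filter, Finset.mem_range] at hi
    exact hi.1
  · intro n
    rcases Nat.eq_zero_or_pos n with rfl | hn
    · simp
    have hcn := hcpos n hn
    have h1 : n ≤ f n * c n := by
      have := le_smul_ceilDiv (α := ℕ) (b := n) (hf0 n hn)
      simpa [smul_eq_mul] using this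
    calc ((Finset.range n).filter (fun j => (j + 1) % c n = 0)).card
        ≤ (Finset.Icc 1 (n / c n)).card := by
          apply Finset.card_le_card_of_injOn (fun j => (j + 1) / c n)
          · intro j hj
            simp only [Finset.mem_coe, Finset.mem_filter, Finset.mem_range] at hj
            obtain ⟨hjn, hmod⟩ := hj
            have hdvd : c n ∣ j + 1 := Nat.dvd_of_mod_eq_zero hmod
            simp only [Finset.mem_coe, Finset.mem_Icc]
            constructor
            · exact Nat.one_le_div_iff hcn |>.2 (Nat.le_of_dvd (by omega) hdvd)
            · exact Nat.div_le_div_right hjn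
          · intro a ha b hb hab
            simp only [Finset.coe_filter, Set.mem_setOf_eq, Finset.mem_range] at ha hb
            have h1 : (a + 1) / c n * c n = a + 1 :=
              Nat.div_mul_cancel (Nat.dvd_of_mod_eq_zero ha.2)
            have h2 : (b + 1) / c n * c n = b + 1 :=
              Nat.div_mul_cancel (Nat.dvd_of_mod_eq_zero hb.2)
            have hab' : (a + 1) / c n = (b + 1) / c n := hab
            have : a + 1 = b + 1 := by rw [← h1, ← h2, hab']
            omega
      _ = n / c n := by simp
      _ ≤ f n * c n / c n := Nat.div_le_div_right h1
      _ = f n := Nat.mul_div_cancel _ hcn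
  · intro w
    set n := w.length with hn
    have key : ∀ j, j < n → ((∃ k, 0 < k ∧ j + 1 = k * c n) ↔ (j + 1) % c n = 0) := by
      intro j hj
      have hcn := hcpos n (by omega)
      constructor
      · rintro ⟨k, hk, hjk⟩
        rw [hjk]
        exact Nat.mul_mod_left k (c n)
      · intro hmod
        have hdvd : c n ∣ j + 1 := Nat.dvd_of_mod_eq_zero hmod
        refine ⟨(j + 1) / c n, ?_, (Nat.div_mul_cancel hdvd).symm⟩
        exact (Nat.one_le_div_iff hcn).2 (Nat.le_of_dvd (by omega) hdvd)
    rw [eqDFA_accepts]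
    have hmem : ∀ p : Bool × Bool, p ∈ markWord w ((Finset.range n).filter
        (fun j => (j + 1) % c n = 0)) ↔
        ∃ j, ∃ _ : j < n, p = (w.getD j false, decide ((j + 1) % c n = 0)) := by
      intro p
      simp only [markWord, List.mem_map]
      constructor
      · rintro ⟨⟨x, j⟩, hq, rfl⟩
        rw [List.mk_mem_zipIdx_iff_getElem?] at hq
        have hjn : j < n := by
          by_contra h
          rw [List.getElem?_eq_none (by omega)] at hq
          simp at hq
        refine ⟨j, hjn, ?_⟩
        have hx : w.getD j false = x := by
          simp only [List.getD_eq_getElem?_getD]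
          simp [hq]
        simp only [List.getElem?_eq_getElem hjn, Option.some.injEq] at hq
        rw [← hx]
        simp [hjn, hq]
      · rintro ⟨j, hjn, rfl⟩
        refine ⟨(w.getD j false, j), ?_, ?_⟩
        · rw [List.mk_mem_zipIdx_iff_getElem?]
          simp only [List.getD_eq_getElem?_getD]
          simp [List.getElem?_eq_getElem hjn]
        · simp [hjn]
    constructor
    · intro hw p hp
      rw [hmem] at hp
      obtain ⟨j, hjn, rfl⟩ := hp
      have := hw (j + 1) (by omega) (by omega)
      simp only [Nat.add_sub_cancel] at this
      replace this : w.getD j false = true ↔ ∃ k, 0 < k ∧ j + 1 = k * c n := this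
      rw [key j hjn] at this
      by_cases hb : (j + 1) % c n = 0 <;> simp [hb] at this ⊢ <;> simp [this]
    · intro hM i hi1 hin
      have hjn : i - 1 < n := by omega
      have := hM _ ((hmem _).2 ⟨i - 1, hjn, rfl⟩)
      simp only at this
      rw [show i - 1 + 1 = i by omega] at this
      show w.getD (i - 1) false = true ↔ ∃ k, 0 < k ∧ i = k * c n
      constructor
      · intro ht
        rw [ht] at this
        rw [show i = (i - 1) + 1 by omega, key (i-1) hjn,
          show i - 1 + 1 = i by omega]
        exact of_decide_eq_true this.symm
      · intro hk
        rw [show i = (i - 1) + 1 by omega, key (i-1) hjn,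
          show i - 1 + 1 = i by omega] at hk
        rw [this, hk]
        simp
end

section
/- Let f : ℕ → ℕ satisfy f(n) ≥ 1 for n ≥ 1, f(n) tends to infinity, and f(n)/n tends to 0, and set f'(n) = ⌈n/f(n)⌉. Then the language L_f = { w ∈ {0,1}^n : n ∈ ℕ, and for all 1 ≤ i ≤ n, the i-th symbol of w is 1 iff i is a positive multiple of f'(n) } is not a regular language, i.e., it is not recognized by any deterministic finite automaton (without advice). -/
private lemma my_ceilDiv_pos {m q : ℕ} (hm : 1 ≤ m) (hq : 1 ≤ q) : 1 ≤ m ⌈/⌉ q := by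
  rw [Nat.ceilDiv_eq_add_pred_div, Nat.one_le_div_iff hq]; omega

private lemma my_div_le_ceilDiv {m q : ℕ} (hq : 1 ≤ q) : m / q ≤ m ⌈/⌉ q := by
  rw [Nat.ceilDiv_eq_add_pred_div]; exact Nat.div_le_div_right (by omega)

private lemma my_ceilDiv_le {m q : ℕ} (hq : 1 ≤ q) : m ⌈/⌉ q ≤ m / q + 1 := by
  rw [Nat.ceilDiv_eq_add_pred_div]
  calc (m + q - 1) / q ≤ (m + q) / q := Nat.div_le_div_right (by omega)
    _ = m / q + 1 := Nat.add_div_right m hq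

/-- the canonical word of length `n` with ones exactly at multiples of `p`. -/
private def pat (p n : ℕ) : List Bool := (List.range n).map fun j => decide ((j + 1) % p = 0)

private lemma pat_length (p n : ℕ) : (pat p n).length = n := by simp [pat]

private lemma pat_getD (p : ℕ) {j n : ℕ} (h : j < n) :
    (pat p n).getD j false = decide ((j + 1) % p = 0) := by
  rw [List.getD_eq_getElem _ _ (by simpa [pat_length] using h)]
  simp [pat]

private lemma pat_mem (f : ℕ → ℕ) (n : ℕ) (hp : 1 ≤ n ⌈/⌉ f n) :
    pat (n ⌈/⌉ f n) n ∈ Lf (fun m => m ⌈/⌉ f m) := by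
  intro i h1 h2
  rw [pat_length] at h2
  rw [pat_length, pat_getD (n ⌈/⌉ f n) (by omega : i - 1 < n)]
  have hi : i - 1 + 1 = i := by omega
  rw [hi, decide_eq_true_iff]
  constructor
  · intro h
    obtain ⟨k, hk⟩ := Nat.dvd_of_mod_eq_zero h
    refine ⟨k, Nat.pos_of_ne_zero ?_, hk.trans (Nat.mul_comm _ k)⟩
    rintro rfl; omega
  · rintro ⟨k, hk, rfl⟩
    exact Nat.mul_mod_left k (n ⌈/⌉ f n)

open Filter in
/-- for `f ∈ ω(1) ∩ o(n)` with `f(n) ≥ 1` for `n ≥ 1`, the language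
`L_f` (with `f'(n) = ⌈n / f(n)⌉`) is not regular: no (unadvised) dfa recognizes it. -/
theorem Lf_not_regular (f : ℕ → ℕ)
    (hf0 : ∀ n, 1 ≤ n → 1 ≤ f n)
    (hf1 : Tendsto f atTop atTop)
    (hf2 : Tendsto (fun n => (f n : ℝ) / n) atTop (nhds 0)) :
    ¬ ∃ (σ : Type) (_ : Fintype σ) (M : DFA Bool σ),
        ∀ w : List Bool, w ∈ Lf (fun n => n ⌈/⌉ f n) ↔ w ∈ M.accepts := by
  rintro ⟨σ, inst, M, hM⟩
  set C := Fintype.card σ with hC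
  have h4 : ∀ᶠ n in atTop, 4 ≤ f n := hf1.eventually_ge_atTop 4
  have hsmall : ∀ᶠ n in atTop, (f n : ℝ) / n < 1 / (C + 1) :=
    hf2 (Iio_mem_nhds (by positivity))
  obtain ⟨n, hn8, hf4, hfr⟩ :=
    ((eventually_ge_atTop (max 8 (C + 8))).and (h4.and hsmall)).exists
  have hnC : C + 8 ≤ n := le_trans (le_max_right _ _) hn8
  have hn8' : 8 ≤ n := le_trans (le_max_left _ _) hn8
  have hfn1 : 1 ≤ f n := by omega
  -- turn the real inequality into `(C+1) * f n ≤ n`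
  have hCfn : (C + 1) * f n ≤ n := by
    have hnpos : (0 : ℝ) < n := by positivity
    have hC1 : (0 : ℝ) < (C : ℝ) + 1 := by positivity
    rw [div_lt_div_iff₀ hnpos hC1] at hfr
    have : ((C + 1) * f n : ℝ) < n := by push_cast; nlinarith
    exact_mod_cast this.le
  set p := n ⌈/⌉ f n with hpdef
  have hpC : C + 1 ≤ p := by
    refine le_trans ?_ (my_div_le_ceilDiv hfn1)
    rw [Nat.le_div_iff_mul_le hfn1]; omega
  have hp1 : 1 ≤ p := by omega
  have hub : p ≤ n / 4 + 1 :=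
    le_trans (my_ceilDiv_le hfn1)
      (Nat.add_le_add_right (Nat.div_le_div_left hf4 (by norm_num)) 1)
  have h2p : 2 * p ≤ n := by omega
  -- the word of length n in the language
  have hmemL : pat p n ∈ Lf (fun m => m ⌈/⌉ f m) := pat_mem f n hp1
  have hacc : pat p n ∈ M.accepts := (hM _).mp hmemL
  obtain ⟨a, b, c, hw, hlen, hb, hsub⟩ :=
    M.pumping_lemma hacc (by rw [pat_length]; omega)
  have ht : 1 ≤ b.length := List.length_pos_iff.mpr hb
  have hst : a.length + b.length ≤ C := hlen
  have hlensum : a.length + b.length + c.length = n := by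
    have := congrArg List.length hw
    simp [pat_length] at this
    omega
  -- the pumped word
  set w' : List Bool := a ++ (b ++ b) ++ c with hw'def
  have hw'acc : w' ∈ M.accepts := by
    apply hsub
    show w' ∈ ({a} * KStar.kstar {b} * {c} : Language Bool)
    rw [Language.mem_mul]
    refine ⟨a ++ (b ++ b), ?_, c, rfl, by simp [hw'def]⟩
    rw [Language.mem_mul]
    refine ⟨a, rfl, b ++ b, ?_, rfl⟩
    rw [Language.mem_kstar]
    exact ⟨[b, b], by simp, fun y hy => by simp at hy; exact hy ▸ rfl⟩
  have hmem' := (hM w').mpr hw'acc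
  have hlw' : w'.length = n + b.length := by
    simp only [hw'def, List.length_append]; omega
  have hmem2 : ∀ i : ℕ, 1 ≤ i → i ≤ n + b.length →
      (w'.getD (i - 1) false = true ↔
        ∃ k : ℕ, 0 < k ∧ i = k * ((n + b.length) ⌈/⌉ f (n + b.length))) := by
    intro i h1 h2
    have h := hmem' i h1 (by rw [hlw']; exact h2)
    rwa [hlw'] at h
  -- getD of the pumped word
  have key_lo : ∀ j, j < a.length + b.length →
      w'.getD j false = (pat p n).getD j false := by
    intro j hj
    have h1 : w'.getD j false = (a ++ b).getD j false := by
      rw [show w' = (a ++ b) ++ (b ++ c) by simp [hw'def]]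
      exact List.getD_append (a ++ b) (b ++ c) false j (by simp; omega)
    have h2 : (pat p n).getD j false = (a ++ b).getD j false := by
      rw [show pat p n = (a ++ b) ++ c from hw]
      exact List.getD_append (a ++ b) c false j (by simp; omega)
    rw [h1, h2]
  have key_hi : ∀ j, a.length + b.length ≤ j →
      w'.getD j false = (pat p n).getD (j - b.length) false := by
    intro j hj
    have h1 : w'.getD j false = (b ++ c).getD (j - (a.length + b.length)) false := by
      rw [show w' = (a ++ b) ++ (b ++ c) by simp [hw'def]]
      have := List.getD_append_right (a ++ b) (b ++ c) false j (by simp; omega)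
      rw [this]
      congr 1
      simp
    have h2 : (pat p n).getD (j - b.length) false
        = (b ++ c).getD (j - b.length - a.length) false := by
      rw [show pat p n = a ++ (b ++ c) by rw [hw, List.append_assoc]]
      exact List.getD_append_right a (b ++ c) false (j - b.length) (by omega)
    rw [h1, h2, show j - (a.length + b.length) = j - b.length - a.length by omega]
  -- positions p + b.length and 2p + b.length carry a one
  have pos1 : w'.getD (p + b.length - 1) false = true := by
    rw [key_hi _ (by omega), show p + b.length - 1 - b.length = p - 1 by omega,
      pat_getD p (by omega : p - 1 < n), show p - 1 + 1 = p by omega]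
    simp
  have pos2 : w'.getD (2 * p + b.length - 1) false = true := by
    rw [key_hi _ (by omega), show 2 * p + b.length - 1 - b.length = 2 * p - 1 by omega,
      pat_getD p (by omega : 2 * p - 1 < n), show 2 * p - 1 + 1 = 2 * p by omega]
    simp [Nat.mul_mod_right]
  set p' := (n + b.length) ⌈/⌉ f (n + b.length) with hp'def
  obtain ⟨k1, hk1, he1⟩ := (hmem2 (p + b.length) (by omega) (by omega)).mp pos1
  obtain ⟨k2, hk2, he2⟩ := (hmem2 (2 * p + b.length) (by omega) (by omega)).mp pos2
  have hd1 : p' ∣ p + b.length := he1 ▸ dvd_mul_left p' k1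
  have hd2 : p' ∣ 2 * p + b.length := he2 ▸ dvd_mul_left p' k2
  have hdp : p' ∣ p := by
    have h := Nat.dvd_sub hd2 hd1
    rwa [show 2 * p + b.length - (p + b.length) = p by omega] at h
  have hdt : p' ∣ b.length := by
    have h := Nat.dvd_sub hd1 hdp
    rwa [show p + b.length - p = b.length by omega] at h
  have hp'1 : 1 ≤ p' := my_ceilDiv_pos (by omega) (hf0 _ (by omega))
  have hp't : p' ≤ b.length := Nat.le_of_dvd (by omega) hdt
  have hone : w'.getD (p' - 1) false = true :=
    (hmem2 p' hp'1 (by omega)).mpr ⟨1, one_pos, (one_mul p').symm⟩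
  rw [key_lo _ (by omega), pat_getD p (by omega : p' - 1 < n),
    show p' - 1 + 1 = p' by omega, decide_eq_true_iff,
    Nat.mod_eq_of_lt (by omega : p' < p)] at hone
  omega
end

section
/- For every integer k > 1, every deterministic finite automaton (without advice) whose accepted language equals LANG_k = { w ∈ {0,1}* : |w| < k, or the (i+1)-st symbol of w equals 1 where i = |w| mod k } has at least 2^k states. -/
/-- The language `LANG_k`: a word `w` over `{0,1}` is a member iff `|w| < k`, or the
`(i+1)`-st symbol of `w` (i.e. the symbol at 0-based index `i`) equals `1`, where
`i = |w| mod k` (`false` plays the role of `0` and `true` the role of `1`). -/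
def LANG (k : ℕ) : Set (List Bool) :=
  { w | w.length < k ∨ w.getD (w.length % k) false = true }

/-- any unadvised dfa recognizing `LANG_k` has at least `2^k` states. -/
theorem LANG_unadvised_lower_bound (k : ℕ) (hk : 1 < k)
    (σ : Type) [Fintype σ] (M : DFA Bool σ)
    (hM : ∀ w : List Bool, w ∈ M.accepts ↔ w ∈ LANG k) :
    2 ^ k ≤ Fintype.card σ := by
  have key : Function.Injective (fun b : Fin k → Bool => M.eval (List.ofFn b)) := by
    intro b1 b2 hfb
    by_contra hne
    obtain ⟨i, hi⟩ : ∃ i, b1 i ≠ b2 i := by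
      by_contra h
      push_neg at h
      exact hne (funext h)
    have mem : ∀ b : Fin k → Bool,
        (List.ofFn b ++ List.replicate (i : ℕ) false ∈ M.accepts) ↔ b i = true := by
      intro b
      rw [hM]
      have hlen : (List.ofFn b ++ List.replicate (i : ℕ) false).length = k + i := by
        simp
      constructor
      · rintro (h | h)
        · rw [hlen] at h; omega
        · rw [hlen] at h
          have hmod : (k + (i : ℕ)) % k = i := by
            rw [Nat.add_mod_left]; exact Nat.mod_eq_of_lt i.isLt
          rw [hmod] at h
          rwa [List.getD_append _ _ _ _ (by simp [i.isLt]), List.getD_eq_getElem _ _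
            (by simp [i.isLt]), List.getElem_ofFn] at h
      · intro h
        right
        rw [hlen]
        have hmod : (k + (i : ℕ)) % k = i := by
          rw [Nat.add_mod_left]; exact Nat.mod_eq_of_lt i.isLt
        rw [hmod, List.getD_append _ _ _ _ (by simp [i.isLt]), List.getD_eq_getElem _ _
          (by simp [i.isLt]), List.getElem_ofFn]
        exact h
    have heq : (List.ofFn b1 ++ List.replicate (i : ℕ) false ∈ M.accepts) ↔
        (List.ofFn b2 ++ List.replicate (i : ℕ) false ∈ M.accepts) := by
      simp only [DFA.mem_accepts, DFA.eval, DFA.evalFrom_of_append]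
      simp only at hfb
      rw [show M.evalFrom M.start (List.ofFn b1) = M.eval (List.ofFn b1) from rfl,
        show M.evalFrom M.start (List.ofFn b2) = M.eval (List.ofFn b2) from rfl, hfb]
    rw [mem b1, mem b2] at heq
    cases h1 : b1 i <;> cases h2 : b2 i <;> simp_all
  calc 2 ^ k = Fintype.card (Fin k → Bool) := by simp
    _ ≤ Fintype.card σ := Fintype.card_le_of_injective _ key
end

section
/- For every integer k > 1, there is a deterministic finite automaton with exactly k+3 states that recognizes LANG_k = { w ∈ {0,1}* : |w| < k, or the (i+1)-st symbol of w equals 1 where i = |w| mod k } with the help of k-bit prefix advice. -/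
section Aux
variable {k : ℕ}

/-- step function of the advice DFA -/
def advStep (k : ℕ) (hk : 0 < k) : (Fin k ⊕ Fin 3) → (Bool ⊕ Bool) → (Fin k ⊕ Fin 3)
  | Sum.inl j, x =>
      if j.1 = 0 then (if x = Sum.inr true then Sum.inr 1 else Sum.inr 2)
      else Sum.inl ⟨j.1 - 1, by omega⟩
  | Sum.inr s, x =>
      if s = 0 then (if x = Sum.inl true then Sum.inl ⟨k - 1, by omega⟩ else Sum.inr 0)
      else Sum.inr s

def advM (k : ℕ) (hk : 0 < k) : DFA (Bool ⊕ Bool) (Fin k ⊕ Fin 3) :=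
  ⟨advStep k hk, Sum.inr 0, {Sum.inr 0, Sum.inr 1}⟩

lemma adv_sink (hk : 0 < k) (s : Fin 3) (hs : s ≠ 0) (l : List (Bool ⊕ Bool)) :
    (advM k hk).evalFrom (Sum.inr s) l = Sum.inr s := by
  induction l with
  | nil => rfl
  | cons x l ih =>
      have : (advM k hk).step (Sum.inr s) x = Sum.inr s := by
        simp [advM, advStep, hs]
      rw [show (x :: l) = [x] ++ l from rfl, DFA.evalFrom_of_append,
        DFA.evalFrom_singleton, this, ih]

lemma adv_stay (hk : 0 < k) (l : List (Bool ⊕ Bool)) (hl : ∀ x ∈ l, x ≠ Sum.inl true) :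
    (advM k hk).evalFrom (Sum.inr 0) l = Sum.inr 0 := by
  induction l with
  | nil => rfl
  | cons x l ih =>
      have hx : x ≠ Sum.inl true := hl x (by simp)
      have : (advM k hk).step (Sum.inr 0) x = Sum.inr 0 := by
        simp [advM, advStep, hx]
      rw [show (x :: l) = [x] ++ l from rfl, DFA.evalFrom_of_append,
        DFA.evalFrom_singleton, this, ih (fun y hy => hl y (by simp [hy]))]

lemma adv_countdown (hk : 0 < k) (l : List (Bool ⊕ Bool)) :
    ∀ j (hj : j < k) (hlen : l.length ≤ j),
    (advM k hk).evalFrom (Sum.inl ⟨j, hj⟩) l = Sum.inl ⟨j - l.length, by omega⟩ := by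
  induction l with
  | nil => intro j hj hlen; rfl
  | cons x l ih =>
      intro j hj hlen
      simp only [List.length_cons] at hlen
      have hj0 : j ≠ 0 := by omega
      have hstep : (advM k hk).step (Sum.inl ⟨j, hj⟩) x = Sum.inl ⟨j - 1, by omega⟩ := by
        simp [advM, advStep, hj0]
      rw [show (advM k hk).evalFrom (Sum.inl ⟨j, hj⟩) (x :: l) =
            (advM k hk).evalFrom ((advM k hk).step (Sum.inl ⟨j, hj⟩) x) l from rfl,
        hstep, ih (j - 1) (by omega) (by omega)]
      congr 1
      apply Fin.ext
      simp only [List.length_cons]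
      omega

lemma ofFn_indicator (k i : ℕ) (hi : i < k) :
    List.ofFn (fun p : Fin k => decide (i ≤ p.1)) =
      List.replicate i false ++ List.replicate (k - i) true := by
  apply List.ext_getElem
  · simp; omega
  · intro n h1 h2
    simp only [List.getElem_ofFn]
    rcases lt_or_ge n i with h | h
    · rw [List.getElem_append_left (by simpa using h)]
      simp [h, Nat.not_le.mpr h]
    · rw [List.getElem_append_right (by simpa using h)]
      simp [h]
end Aux

/-- `LANG_k` is recognized by a dfa with exactly `k+3` states with the
help of `k`-bit prefix advice. -/
theorem LANG_prefix_advice_upper_bound (k : ℕ) (hk : 1 < k) :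
    ∃ (σ : Type) (inst : Fintype σ) (M : DFA (Bool ⊕ Bool) σ) (h : ℕ → Fin k → Bool),
      @Fintype.card σ inst = k + 3 ∧
      ∀ w : List Bool, w ∈ LANG k ↔
        ((List.ofFn (h w.length)).map Sum.inl ++ w.map Sum.inr) ∈ M.accepts := by
  have hk0 : 0 < k := by omega
  refine ⟨Fin k ⊕ Fin 3, inferInstance, advM k hk0,
    fun n => if n < k then (fun _ => false) else (fun p => decide (n % k ≤ p.1)), ?_, ?_⟩
  · simp
  intro w
  rw [DFA.mem_accepts]
  by_cases hnk : w.length < k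
  · -- advice is all false; DFA stays in start state, which accepts
    simp only [hnk, if_pos]
    have hofn : List.ofFn (fun _ : Fin k => false) = List.replicate k false :=
      List.ofFn_const k false
    have hstay : (advM k hk0).evalFrom (Sum.inr 0)
        ((List.ofFn (fun _ : Fin k => false)).map Sum.inl ++ w.map Sum.inr) = Sum.inr 0 := by
      apply adv_stay
      intro x hx
      simp only [List.mem_append, List.mem_map] at hx
      rcases hx with ⟨b, hb, rfl⟩ | ⟨b, hb, rfl⟩
      · rw [hofn] at hb
        simp only [List.mem_replicate] at hb
        simp [hb.2]
      · simp
    constructor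
    · intro _
      show (advM k hk0).eval _ ∈ (advM k hk0).accept
      rw [DFA.eval]
      show (advM k hk0).evalFrom (Sum.inr 0) _ ∈ _
      rw [hstay]; left; rfl
    · intro _
      exact Or.inl hnk
  · -- main case: w.length ≥ k
    push_neg at hnk
    have hik : w.length % k < k := Nat.mod_lt _ hk0
    have hin : w.length % k < w.length := lt_of_lt_of_le hik hnk
    simp only [if_neg (show ¬ w.length < k by omega)]
    have hadv : (List.ofFn fun p : Fin k => decide (w.length % k ≤ p.1)) =
        List.replicate (w.length % k) false ++ List.replicate (k - w.length % k) true :=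
      ofFn_indicator k _ hik
    have hrepl : k - w.length % k = (k - w.length % k - 1) + 1 := by omega
    set m := k - w.length % k - 1 with hm
    -- full input decomposition
    have hinput : (List.ofFn fun p : Fin k => decide (w.length % k ≤ p.1)).map Sum.inl ++
          w.map Sum.inr =
        (List.replicate (w.length % k) (Sum.inl false) ++ [Sum.inl true]) ++
          (List.replicate m (Sum.inl true) ++ w.map Sum.inr) := by
      rw [hadv, hrepl]
      simp [List.replicate_succ]
    rw [hinput]
    set M := advM k hk0 with hM
    have e1 : M.evalFrom (Sum.inr 0) (List.replicate (w.length % k) (Sum.inl false)) =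
        Sum.inr 0 := by
      apply adv_stay
      intro x hx
      simp only [List.mem_replicate] at hx
      simp [hx.2]
    have e2 : M.step (Sum.inr 0) (Sum.inl true) = Sum.inl ⟨k - 1, by omega⟩ := by
      simp [hM, advM, advStep]
    have eA : M.evalFrom (Sum.inr 0)
        (List.replicate (w.length % k) (Sum.inl false) ++ [Sum.inl true]) =
        Sum.inl ⟨k - 1, by omega⟩ := by
      rw [DFA.evalFrom_append_singleton, e1, e2]
    -- rest: replicate m ++ word
    set rest : List (Bool ⊕ Bool) := List.replicate m (Sum.inl true) ++ w.map Sum.inr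
      with hrest
    have hrestlen : rest.length = m + w.length := by simp [hrest]
    have hklen : k - 1 ≤ rest.length := by omega
    have e3 : M.evalFrom (Sum.inl ⟨k - 1, by omega⟩) (rest.take (k - 1)) =
        Sum.inl ⟨0, by omega⟩ := by
      rw [adv_countdown hk0 (rest.take (k - 1)) (k - 1) (by omega)
        (by rw [List.length_take]; omega)]
      congr 1
      apply Fin.ext
      simp only [List.length_take]
      omega
    have hdrop : rest.drop (k - 1) =
        Sum.inr (w[w.length % k]'hin) :: ((w.drop (w.length % k + 1)).map Sum.inr) := by
      have h1 : k - 1 =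
          (List.replicate m (Sum.inl true : Bool ⊕ Bool)).length + w.length % k := by
        simp only [List.length_replicate]; omega
      conv_lhs => rw [hrest, h1, List.drop_length_add_append,
        ← List.map_drop, List.drop_eq_getElem_cons hin, List.map_cons]
    have e4 : M.step (Sum.inl ⟨0, by omega⟩) (Sum.inr (w[w.length % k]'hin)) =
        if w[w.length % k]'hin = true then Sum.inr 1 else Sum.inr 2 := by
      by_cases hb : w[w.length % k]'hin = true
      · simp [hM, advM, advStep, hb]
      · simp only [Bool.not_eq_true] at hb
        simp [hM, advM, advStep, hb]
    have eB : M.evalFrom (Sum.inl ⟨k - 1, by omega⟩) rest =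
        if w[w.length % k]'hin = true then Sum.inr 1 else Sum.inr 2 := by
      conv_lhs => rw [← List.take_append_drop (k - 1) rest]
      rw [M.evalFrom_of_append (Sum.inl ⟨k - 1, by omega⟩) (rest.take (k - 1))
        (rest.drop (k - 1)), e3, hdrop]
      rw [show M.evalFrom (Sum.inl ⟨0, by omega⟩)
            (Sum.inr (w[w.length % k]'hin) :: ((w.drop (w.length % k + 1)).map Sum.inr)) =
          M.evalFrom (M.step (Sum.inl ⟨0, by omega⟩) (Sum.inr (w[w.length % k]'hin)))
            ((w.drop (w.length % k + 1)).map Sum.inr) from rfl, e4]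
      by_cases hb : w[w.length % k]'hin = true
      · simp only [hb, if_pos]
        exact adv_sink hk0 1 (by decide) _
      · simp only [Bool.not_eq_true] at hb
        simp only [hb, Bool.false_eq_true, if_neg, ite_false]
        exact adv_sink hk0 2 (by decide) _
    have efinal : M.eval
        ((List.replicate (w.length % k) (Sum.inl false) ++ [Sum.inl true]) ++ rest) =
        if w[w.length % k]'hin = true then Sum.inr 1 else Sum.inr 2 := by
      rw [DFA.eval, show M.start = (Sum.inr 0 : Fin k ⊕ Fin 3) from rfl,
        M.evalFrom_of_append (Sum.inr 0)
          (List.replicate (w.length % k) (Sum.inl false) ++ [Sum.inl true]) rest, eA, eB]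
    constructor
    · intro hw
      rcases hw with hlt | hget
      · omega
      show M.eval _ ∈ M.accept
      rw [efinal]
      rw [List.getD_eq_getElem _ _ hin] at hget
      rw [hget]
      right; rfl
    · intro hw
      right
      have hmem : M.eval _ ∈ M.accept := hw
      rw [efinal] at hmem
      by_cases hb : w[w.length % k]'hin = true
      · rw [List.getD_eq_getElem _ _ hin]
        exact hb
      · exfalso
        simp only [Bool.not_eq_true] at hb
        simp only [hb, Bool.false_eq_true, ite_false] at hmem
        simp only [hM, advM, Set.mem_insert_iff, Set.mem_singleton_iff] at hmem
        rcases hmem with h | h <;> exact absurd (Sum.inr.inj h) (by decide)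
end

section
/- For every integer k > 1, no deterministic finite automaton with fewer than k states recognizes LANG_k = { w ∈ {0,1}* : |w| < k, or the (i+1)-st symbol of w equals 1 where i = |w| mod k } with the help of binary prefix advice, where the advice string may have arbitrary length depending on the input length. -/
/-- no dfa with fewer than `k` states recognizes `LANG_k` with binary
prefix advice of arbitrary length. -/
theorem LANG_prefix_advice_lower_bound (k : ℕ) (hk : 1 < k)
    (σ : Type) [Fintype σ] (M : DFA (Bool ⊕ Bool) σ) (h : ℕ → List Bool)
    (hM : ∀ w : List Bool, w ∈ LANG k ↔
        ((h w.length).map Sum.inl ++ w.map Sum.inr) ∈ M.accepts) :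
    k ≤ Fintype.card σ := by
  by_contra hcard
  push_neg at hcard
  set m := Fintype.card σ with hm
  obtain ⟨mm, hmm⟩ : ∃ mm, mm = m * m := ⟨_, rfl⟩
  set n := k * (mm + m + 1) + (k - 1) with hn
  have hkmul : mm + m + 1 ≤ k * (mm + m + 1) := Nat.le_mul_of_pos_left _ (by omega)
  have hkmul2 : mm + m ≤ k * (mm + m) := Nat.le_mul_of_pos_left _ (by omega)
  have hring : k * (mm + m + 1) = k * (mm + m) + k := by ring
  have hnk : n % k = k - 1 := by
    rw [hn, Nat.mul_add_mod, Nat.mod_eq_of_lt (by omega)]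
  have hnge : k ≤ n := by omega
  set s : σ := M.evalFrom M.start ((h n).map Sum.inl) with hs
  -- base fact: for words of length n, acceptance from s equals bit at k-1
  have base : ∀ w : List Bool, w.length = n →
      (M.evalFrom s (w.map Sum.inr) ∈ M.accept ↔ w.getD (k-1) false = true) := by
    intro w hw
    have h1 := hM w
    rw [DFA.mem_accepts] at h1
    have h2 : M.eval ((h w.length).map Sum.inl ++ w.map Sum.inr)
        = M.evalFrom s (w.map Sum.inr) := by
      rw [DFA.eval, M.evalFrom_of_append, hw, hs]
    rw [h2] at h1
    rw [← h1]
    simp only [LANG, Set.mem_setOf_eq, hw, hnk]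
    constructor
    · rintro (hlt | hbit)
      · omega
      · exact hbit
    · intro hbit; exact Or.inr hbit
  -- appending runs
  have step_append : ∀ (q : σ) (u v : List Bool),
      M.evalFrom q ((u ++ v).map Sum.inr)
        = M.evalFrom (M.evalFrom q (u.map Sum.inr)) (v.map Sum.inr) := by
    intro q u v
    rw [List.map_append, M.evalFrom_of_append]
  -- the zero-run from s
  set p : ℕ → σ := fun j => M.evalFrom s ((List.replicate j false).map Sum.inr) with hp
  have pshift : ∀ j t, p (j + t)
      = M.evalFrom (p j) ((List.replicate t false).map Sum.inr) := by
    intro j t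
    rw [hp]
    simp only
    rw [← step_append, ← List.replicate_add]
  have Pdict : ∀ (j : ℕ) (v : List Bool), j + v.length = n → j ≤ k - 1 →
      (M.evalFrom (p j) (v.map Sum.inr) ∈ M.accept ↔ v.getD (k-1-j) false = true) := by
    intro j v hlen hj
    have hb := base (List.replicate j false ++ v) (by simp; omega)
    rw [step_append] at hb
    rw [hb, List.getD_append_right _ _ _ _ (by simp [hj]), List.length_replicate]
  have Pconst : ∀ (j : ℕ) (v : List Bool), j + v.length = n → k ≤ j →
      ¬ (M.evalFrom (p j) (v.map Sum.inr) ∈ M.accept) := by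
    intro j v hlen hj
    have hb := base (List.replicate j false ++ v) (by simp; omega)
    rw [step_append] at hb
    rw [hb, List.getD_append _ _ _ _ (by simp; omega)]
    simp [List.getD]
  -- pigeonhole on the zero-run
  obtain ⟨i1, i2, hne, heq⟩ := Fintype.exists_ne_map_eq_of_card_lt
    (fun i : Fin (m+1) => p i) (by simp; exact hm.ge)
  obtain ⟨a, b, hab, hbm, hpab⟩ : ∃ a b : ℕ, a < b ∧ b ≤ m ∧ p a = p b := by
    rcases lt_or_gt_of_ne (Fin.val_ne_of_ne hne) with hlt | hlt
    · exact ⟨i1, i2, hlt, by omega, heq⟩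
    · exact ⟨i2, i1, hlt, by omega, heq.symm⟩
  set π := b - a with hπdef
  have hπ : 0 < π := by omega
  have per1 : ∀ u, p (a + u + π) = p (a + u) := by
    intro u
    have h1 : a + u + π = b + u := by omega
    rw [h1, pshift b u, pshift a u, hpab]
  have per : ∀ u c, p (a + u + c * π) = p (a + u) := by
    intro u c
    induction c with
    | zero => simp
    | succ c ih =>
      have : a + u + (c + 1) * π = a + (u + c * π) + π := by ring
      rw [this, per1 (u + c * π)]
      have : a + (u + c * π) = a + u + c * π := by omega
      rw [this, ih]
  have ham : a ≤ m := by omega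
  set e := (k - 1 - a) % π with hedef
  set c₀ := (k - 1 - a) / π with hc₀def
  have hc₀ : π * c₀ + e = k - 1 - a := Nat.div_add_mod _ _
  have heπ : e < π := Nat.mod_lt _ hπ
  have hppa : p (k - 1 - e) = p a := by
    have h1 := per 0 c₀
    have h2 : a + 0 + c₀ * π = k - 1 - e := by
      have : c₀ * π = π * c₀ := by ring
      omega
    rw [h2] at h1
    simpa using h1
  set q := p a with hq
  have Qdict : ∀ v : List Bool, (k - 1 - e) + v.length = n →
      (M.evalFrom q (v.map Sum.inr) ∈ M.accept ↔ v.getD e false = true) := by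
    intro v hlen
    have := Pdict (k - 1 - e) v hlen (by omega)
    rw [hppa] at this
    rw [hq, this]
    have : k - 1 - (k - 1 - e) = e := by omega
    rw [this]
  have Qconst : ∀ (t : ℕ) (v : List Bool), 1 ≤ t →
      (k - 1 - e + π * t) + v.length = n →
      ¬ (M.evalFrom q (v.map Sum.inr) ∈ M.accept) := by
    intro t v ht hlen
    have hπt : π ≤ π * t := Nat.le_mul_of_pos_right _ (by omega)
    have hj : p (k - 1 - e + π * t) = p a := by
      have h1 := per 0 (c₀ + t)
      have h2 : a + 0 + (c₀ + t) * π = k - 1 - e + π * t := by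
        have hmul : (c₀ + t) * π = π * c₀ + π * t := by ring
        omega
      rw [h2] at h1
      simpa using h1
    have := Pconst (k - 1 - e + π * t) v hlen (by omega)
    rw [hj] at this
    exact this
  -- the state y
  set y := M.evalFrom q ((List.replicate e false ++ [true]).map Sum.inr) with hy
  set A := n - k with hA
  have Ytrue : ∀ v : List Bool, v.length = A →
      M.evalFrom y (v.map Sum.inr) ∈ M.accept := by
    intro v hv
    rw [hy, ← step_append]
    have hlen : (k - 1 - e) + ((List.replicate e false ++ [true]) ++ v).length = n := by
      simp; omega
    rw [Qdict _ hlen, List.append_assoc,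
      List.getD_append_right _ _ _ _ (by simp), List.length_replicate]
    simp
  have Yfalse : ∀ (t : ℕ) (v : List Bool), 1 ≤ t → v.length + π * t = A →
      ¬ (M.evalFrom y (v.map Sum.inr) ∈ M.accept) := by
    intro t v ht hv
    rw [hy, ← step_append]
    apply Qconst t _ ht
    simp
    omega
  -- zero-run from y
  set yz : ℕ → σ := fun r => M.evalFrom y ((List.replicate r false).map Sum.inr) with hyz
  have yzshift : ∀ j t, yz (j + t)
      = M.evalFrom (yz j) ((List.replicate t false).map Sum.inr) := by
    intro j t
    show M.evalFrom y ((List.replicate (j + t) false).map Sum.inr) = _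
    rw [List.replicate_add, step_append]
  obtain ⟨i3, i4, hne2, heq2⟩ := Fintype.exists_ne_map_eq_of_card_lt
    (fun i : Fin (m+1) => yz i) (by simp; exact hm.ge)
  obtain ⟨a', b', hab', hbm', hyab⟩ : ∃ a b : ℕ, a < b ∧ b ≤ m ∧ yz a = yz b := by
    rcases lt_or_gt_of_ne (Fin.val_ne_of_ne hne2) with hlt | hlt
    · exact ⟨i3, i4, hlt, by omega, heq2⟩
    · exact ⟨i4, i3, hlt, by omega, heq2.symm⟩
  set π' := b' - a' with hπ'def
  have hπ' : 0 < π' := by omega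
  have per1' : ∀ u, yz (a' + u + π') = yz (a' + u) := by
    intro u
    have h1 : a' + u + π' = b' + u := by omega
    rw [h1, yzshift b' u, yzshift a' u, hyab]
  have per' : ∀ u c, yz (a' + u + c * π') = yz (a' + u) := by
    intro u c
    induction c with
    | zero => simp
    | succ c ih =>
      have : a' + u + (c + 1) * π' = a' + (u + c * π') + π' := by ring
      rw [this, per1' (u + c * π')]
      have : a' + (u + c * π') = a' + u + c * π' := by omega
      rw [this, ih]
  -- sizes
  have hπm : π ≤ m := by omega
  have hπ'm : π' ≤ m := by omega
  have hππ' : π * π' ≤ mm := by rw [hmm]; exact Nat.mul_le_mul hπm hπ'm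
  have hAbig : a' + π * π' < A := by omega
  set L := A - a' - π * π' with hL
  -- contradiction
  have t1 : M.evalFrom (yz a') ((List.replicate L false).map Sum.inr) ∈ M.accept := by
    have h1 : yz (a' + L + π * π') = yz (a' + L) := per' L π
    have h2 : a' + L + π * π' = A := by omega
    have h3 : yz A ∈ M.accept := by
      rw [hyz]
      exact Ytrue (List.replicate A false) (by simp)
    rw [h2] at h1
    rw [← yzshift, ← h1]
    exact h3
  have t2 : ¬ (M.evalFrom (yz a') ((List.replicate L false).map Sum.inr) ∈ M.accept) := by
    rw [← yzshift]
    show M.evalFrom y ((List.replicate (a' + L) false).map Sum.inr) ∉ M.accept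
    apply Yfalse π' _ (by omega)
    simp
    omega
  exact t2 t1
end

section
/- For every integer k > 1, there is a deterministic finite automaton with exactly 2 states that recognizes LANG_k = { w ∈ {0,1}* : |w| < k, or the (i+1)-st symbol of w equals 1 where i = |w| mod k } with at most one inkdot of advice. -/
/-- The transition: on a marked symbol, record its bit; otherwise keep state. -/
def inkStep (s : Bool) (c : Bool × Bool) : Bool := if c.2 then c.1 else s

lemma inkStep_empty (w : List Bool) (i : ℕ) (s : Bool) :
    List.foldl inkStep s ((List.zipIdx w i).map
      (fun p => ((p.1 : Bool), false))) = s := by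
  induction w generalizing i s with
  | nil => rfl
  | cons a w ih => simp [List.zipIdx_cons, ih, inkStep]

lemma inkStep_single (j : ℕ) (w : List Bool) (i : ℕ) (s : Bool) :
    List.foldl inkStep s ((List.zipIdx w i).map
      (fun p => (p.1, decide (p.2 ∈ ({j} : Finset ℕ))))) =
      if i ≤ j ∧ j < i + w.length then w.getD (j - i) false else s := by
  induction w generalizing i s with
  | nil => simp; omega
  | cons a w ih =>
    simp only [List.zipIdx_cons, List.map_cons, List.foldl_cons, ih, inkStep,
      List.length_cons]
    rcases eq_or_ne i j with hij | hij
    · subst hij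
      rw [if_neg (by omega : ¬(i + 1 ≤ i ∧ i < i + 1 + w.length)),
        if_pos (show i ≤ i ∧ i < i + (w.length + 1) by omega)]
      simp
    · have hd : decide (i ∈ ({j} : Finset ℕ)) = false := by simp [hij]
      rw [hd]
      simp only [Bool.false_eq_true, if_false]
      by_cases hle : i + 1 ≤ j ∧ j < i + 1 + w.length
      · rw [if_pos hle, if_pos (show i ≤ j ∧ j < i + (w.length + 1) by omega)]
        have hji : j - i = (j - (i + 1)) + 1 := by omega
        simp [hji]
      · rw [if_neg hle, if_neg (show ¬(i ≤ j ∧ j < i + (w.length + 1)) by omega)]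

/-- `LANG_k` is recognized by a dfa with exactly `2` states with at most
one inkdot of advice. -/
theorem LANG_one_inkdot_two_states (k : ℕ) (hk : 1 < k) :
    ∃ (σ : Type) (inst : Fintype σ) (M : DFA (Bool × Bool) σ) (h : ℕ → Finset ℕ),
      @Fintype.card σ inst = 2 ∧
      (∀ n, ∀ i ∈ h n, i < n) ∧
      (∀ n, (h n).card ≤ 1) ∧
      (∀ w : List Bool, w ∈ LANG k ↔ markWord w (h w.length) ∈ M.accepts) := by
  refine ⟨Bool, inferInstance, ⟨inkStep, true, {true}⟩,
    fun n => if n < k then ∅ else {n % k}, ?_, ?_, ?_, ?_⟩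
  · simp
  · intro n i hi
    by_cases hn : n < k <;> simp [hn] at hi
    · subst hi
      have := Nat.mod_lt n (show 0 < k by omega)
      omega
  · intro n
    by_cases hn : n < k <;> simp [hn]
  · intro w
    have haccept : ∀ x : List (Bool × Bool),
        x ∈ DFA.accepts ⟨inkStep, true, ({true} : Set Bool)⟩ ↔
          List.foldl inkStep true x = true := by
      intro x; rfl
    rw [haccept]
    by_cases hn : w.length < k
    · simp only [markWord]
      simp only [hn, if_true]
      simp only [Finset.notMem_empty, decide_false]
      rw [inkStep_empty]
      simp [LANG, hn]
    · simp only [markWord]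
      simp only [hn, if_false]
      rw [inkStep_single]
      have hlt : w.length % k < w.length := by
        have := Nat.mod_lt w.length (show 0 < k by omega)
        omega
      rw [if_pos (by omega)]
      simp [LANG, hn]
end

section
/- The language L_3 = { 0^m 1^m 0^m 1^m : m > 0 } over {0,1} is recognized with bounded error by a deterministic finite automaton with randomized advice of at most 2 inkdots: there is a DFA M over {0,1} × Bool and, for each n, a probability distribution over sets of at most 2 positions in {0,…,n−1}, such that every member of L_3 is accepted with probability at least 2/3 (in fact with probability 1) and every non-member is rejected with probability at least 2/3. -/
open scoped Classical in
/-- `L` is recognized with bounded error by a dfa with randomized advice of at most `k`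
inkdots: for each input length `n` there is a finitely supported probability
distribution `D n` over inkdot patterns (sets of at most `k` positions in
`{0,…,n-1}`), such that members are accepted with probability at least `2/3` and
non-members are rejected with probability at least `2/3`. -/
def RecognizedWithRandomInkdots {α : Type*} (L : Set (List α)) (k : ℕ) : Prop :=
  ∃ (σ : Type) (_ : Fintype σ) (M : DFA (α × Bool) σ) (D : ℕ → (Finset ℕ →₀ NNReal)),
    (∀ n, (∑ S ∈ (D n).support, D n S) = 1) ∧
    (∀ n, ∀ S ∈ (D n).support, (∀ i ∈ S, i < n) ∧ S.card ≤ k) ∧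
    (∀ w : List α,
      (w ∈ L → (2 / 3 : NNReal) ≤ ∑ S ∈ (D w.length).support,
          (if markWord w S ∈ M.accepts then D w.length S else 0)) ∧
      (w ∉ L → (2 / 3 : NNReal) ≤ ∑ S ∈ (D w.length).support,
          (if markWord w S ∈ M.accepts then 0 else D w.length S)))

/-- The language `L_3 = { 0^m 1^m 0^m 1^m : m > 0 }` (`false` plays the role of `0`
and `true` the role of `1`). -/
def L3 : Set (List Bool) :=
  { w | ∃ m : ℕ, 0 < m ∧
      w = List.replicate m false ++ List.replicate m true ++
          List.replicate m false ++ List.replicate m true }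

namespace L3proof

def phase : Fin 6 → Bool → Bool → Fin 6
  | 0, false, false => 1
  | 1, false, false => 1
  | 1, true, _ => 2
  | 2, true, false => 2
  | 2, false, _ => 3
  | 3, false, false => 3
  | 3, true, _ => 4
  | 4, true, false => 4
  | _, _, _ => 5

def M : DFA (Bool × Bool) (Fin 6) where
  step := fun p a => phase p a.1 a.2
  start := 0
  accept := {4}

abbrev FF : Bool × Bool := (false, false)
abbrev TF : Bool × Bool := (true, false)

lemma spec (x : List (Bool × Bool)) :
    (M.eval x = 0 → x = []) ∧
    (M.eval x = 1 → ∃ a, x = List.replicate (a+1) FF) ∧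
    (M.eval x = 2 → ∃ a b d1, x = List.replicate (a+1) FF ++ (true,d1) :: List.replicate b TF) ∧
    (M.eval x = 3 → ∃ a b c d1 d2, x = List.replicate (a+1) FF ++ (true,d1) ::
        (List.replicate b TF ++ (false,d2) :: List.replicate c FF)) ∧
    (M.eval x = 4 → ∃ a b c d d1 d2 d3, x = List.replicate (a+1) FF ++ (true,d1) ::
        (List.replicate b TF ++ (false,d2) :: (List.replicate c FF ++ (true,d3) :: List.replicate d TF))) := by
  induction x using List.reverseRecOn with
  | nil =>
    refine ⟨fun _ => rfl, ?_, ?_, ?_, ?_⟩ <;> (intro h; exact absurd h (by decide))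
  | append_singleton y s ih =>
    obtain ⟨b, d⟩ := s
    have he : M.eval (y ++ [(b, d)]) = phase (M.eval y) b d :=
      DFA.evalFrom_append_singleton ..
    obtain ⟨ih0, ih1, ih2, ih3, ih4⟩ := ih
    refine ⟨?_, ?_, ?_, ?_, ?_⟩ <;> intro h <;> rw [he] at h
    · exact absurd h ((by decide : ∀ p b d, phase p b d ≠ 0) _ _ _)
    · have key : ∀ p b d, phase p b d = 1 → (p = 0 ∨ p = 1) ∧ b = false ∧ d = false := by decide
      obtain ⟨hp, hb, hd⟩ := key _ _ _ h
      subst hb; subst hd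
      rcases hp with hp | hp
      · rw [ih0 hp]; exact ⟨0, rfl⟩
      · obtain ⟨a, ha⟩ := ih1 hp
        exact ⟨a + 1, by rw [ha, List.replicate_succ' (n := a+1)]⟩
    · have key : ∀ p b d, phase p b d = 2 → (p = 1 ∧ b = true) ∨ (p = 2 ∧ b = true ∧ d = false) := by
        decide
      rcases key _ _ _ h with ⟨hp, hb⟩ | ⟨hp, hb, hd⟩
      · obtain ⟨a, ha⟩ := ih1 hp
        subst hb
        exact ⟨a, 0, d, by simp [ha]⟩
      · obtain ⟨a, b', d1, ha⟩ := ih2 hp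
        subst hb; subst hd
        exact ⟨a, b' + 1, d1, by simp [ha, List.replicate_succ', List.append_assoc]⟩
    · have key : ∀ p b d, phase p b d = 3 → (p = 2 ∧ b = false) ∨ (p = 3 ∧ b = false ∧ d = false) := by
        decide
      rcases key _ _ _ h with ⟨hp, hb⟩ | ⟨hp, hb, hd⟩
      · obtain ⟨a, b', d1, ha⟩ := ih2 hp
        subst hb
        exact ⟨a, b', 0, d1, d, by simp [ha]⟩
      · obtain ⟨a, b', c, d1, d2, ha⟩ := ih3 hp
        subst hb; subst hd
        exact ⟨a, b', c + 1, d1, d2, by simp [ha, List.replicate_succ', List.append_assoc]⟩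
    · have key : ∀ p b d, phase p b d = 4 → (p = 3 ∧ b = true) ∨ (p = 4 ∧ b = true ∧ d = false) := by
        decide
      rcases key _ _ _ h with ⟨hp, hb⟩ | ⟨hp, hb, hd⟩
      · obtain ⟨a, b', c, d1, d2, ha⟩ := ih3 hp
        subst hb
        exact ⟨a, b', c, 0, d1, d2, d, by simp [ha]⟩
      · obtain ⟨a, b', c, d', d1, d2, d3, ha⟩ := ih4 hp
        subst hb; subst hd
        exact ⟨a, b', c, d' + 1, d1, d2, d3, by simp [ha, List.replicate_succ', List.append_assoc]⟩

end L3proof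

namespace L3proof

def mark {α : Type*} (S : Finset ℕ) : ℕ → List α → List (α × Bool)
  | _, [] => []
  | k, a :: t => (a, decide (k ∈ S)) :: mark S (k+1) t

lemma mark_enumFrom {α : Type*} (S : Finset ℕ) : ∀ (k : ℕ) (w : List α),
    (w.zipIdx k).map (fun p => (p.1, decide (p.2 ∈ S))) = mark S k w
  | _, [] => rfl
  | k, a :: t => by
      rw [List.zipIdx_cons]
      simpa [mark] using mark_enumFrom S (k+1) t

lemma markWord_eq_mark {α : Type*} (w : List α) (S : Finset ℕ) :
    markWord w S = mark S 0 w := by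
  rw [markWord, mark_enumFrom]

lemma mark_append {α : Type*} (S : Finset ℕ) : ∀ (u : List α) (k : ℕ) (v : List α),
    mark S k (u ++ v) = mark S k u ++ mark S (k + u.length) v
  | [], k, v => by simp [mark]
  | a :: t, k, v => by
      simp only [List.cons_append, mark, mark_append S t (k+1) v, List.length_cons,
        List.append_eq]
      rw [show k + 1 + t.length = k + (t.length + 1) by omega]

lemma mark_replicate {α : Type*} (S : Finset ℕ) (x : α) :
    ∀ (a k : ℕ), (∀ j, k ≤ j → j < k + a → j ∉ S) →
    mark S k (List.replicate a x) = List.replicate a (x, false)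
  | 0, k, _ => rfl
  | a + 1, k, h => by
      rw [List.replicate_succ, List.replicate_succ, mark]
      have hk : k ∉ S := h k le_rfl (by omega)
      rw [mark_replicate S x a (k+1) (fun j h1 h2 => h j (by omega) (by omega))]
      simp [hk]

lemma markWord_map_fst {α : Type*} (w : List α) (S : Finset ℕ) :
    (markWord w S).map Prod.fst = w := by
  rw [markWord, List.map_map]
  exact List.zipIdx_map_fst 0 w

lemma markWord_map_snd {α : Type*} (w : List α) (S : Finset ℕ) :
    (markWord w S).map Prod.snd = (List.range w.length).map (fun i => decide (i ∈ S)) := by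
  rw [markWord, List.map_map, List.range_eq_range', ← List.zipIdx_map_snd 0 w, List.map_map]
  rfl

end L3proof

namespace L3proof

lemma peel {α : Type*} {x y : α} (hxy : x ≠ y) :
    ∀ (a a' : ℕ) (L L' : List α),
      List.replicate a x ++ y :: L = List.replicate a' x ++ y :: L' → a = a' ∧ L = L'
  | 0, 0, L, L', h => by simpa using h
  | 0, a' + 1, L, L', h => by
      rw [List.replicate_succ] at h
      simp at h
      exact absurd h.1.symm hxy
  | a + 1, 0, L, L', h => by
      rw [List.replicate_succ] at h
      simp at h
      exact absurd h.1 hxy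
  | a + 1, a' + 1, L, L', h => by
      rw [List.replicate_succ, List.replicate_succ] at h
      simp only [List.cons_append, List.cons.injEq] at h
      have := peel hxy a a' L L' h.2
      exact ⟨by omega, this.2⟩

lemma rep_getElem_true {a : ℕ} {L : List Bool} {i : ℕ}
    (h : (List.replicate a false ++ L)[i]? = some true) : a ≤ i ∧ L[i - a]? = some true := by
  rcases Nat.lt_or_ge i a with hi | hi
  · rw [List.getElem?_append, if_pos (by simpa using hi), List.getElem?_replicate,
      if_pos hi] at h
    simp at h
  · rw [List.getElem?_append_right (by simpa using hi)] at h
    simp only [List.length_replicate] at h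
    exact ⟨hi, h⟩

lemma cons_getElem_true {d : Bool} {L : List Bool} {j : ℕ}
    (h : ((d :: L))[j]? = some true) : j = 0 ∨ (1 ≤ j ∧ L[j - 1]? = some true) := by
  cases j with
  | zero => exact Or.inl rfl
  | succ n => right; simpa using h

/-- dotted positions of the snd-projection of a `P4`-structured word are boundaries -/
lemma boundary {a b c d : ℕ} {d1 d2 d3 : Bool} {i : ℕ}
    (h : (List.replicate a false ++ d1 :: (List.replicate b false ++ d2 ::
        (List.replicate c false ++ d3 :: List.replicate d false)))[i]? = some true) :
    i = a ∨ i = a + b + 1 ∨ i = a + b + c + 2 := by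
  obtain ⟨h1, h2⟩ := rep_getElem_true h
  rcases cons_getElem_true h2 with h3 | ⟨h3, h4⟩
  · left; omega
  · obtain ⟨h5, h6⟩ := rep_getElem_true h4
    rcases cons_getElem_true h6 with h7 | ⟨h7, h8⟩
    · right; left; omega
    · obtain ⟨h9, h10⟩ := rep_getElem_true h8
      rcases cons_getElem_true h10 with h11 | ⟨h11, h12⟩
      · right; right; omega
      · rw [List.getElem?_replicate] at h12
        split at h12 <;> simp at h12

/-- If the marked word is accepted, then `w` decomposes into four blocks and every
inkdot position (below the length) is a block boundary. -/
lemma accepted_structure {w : List Bool} {S : Finset ℕ}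
    (h : markWord w S ∈ M.accepts) :
    ∃ a b c d : ℕ, 0 < a ∧ 0 < b ∧ 0 < c ∧ 0 < d ∧
      w = List.replicate a false ++ List.replicate b true ++
          List.replicate c false ++ List.replicate d true ∧
      (∀ i ∈ S, i < w.length → i = a ∨ i = a + b ∨ i = a + b + c) := by
  rw [DFA.mem_accepts] at h
  have h4 : M.eval (markWord w S) = 4 := by simpa [M] using h
  obtain ⟨a, b, c, d, d1, d2, d3, hx⟩ := (spec (markWord w S)).2.2.2.2 h4
  refine ⟨a + 1, b + 1, c + 1, d + 1, by omega, by omega, by omega, by omega, ?_, ?_⟩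
  · have hw := markWord_map_fst w S
    rw [hx] at hw
    rw [← hw]
    simp [List.replicate_succ, List.append_assoc]
  · intro i hiS hin
    have hsnd := markWord_map_snd w S
    rw [hx] at hsnd
    simp only [List.map_append, List.map_replicate, List.map_cons] at hsnd
    have hget : ((List.range w.length).map (fun i => decide (i ∈ S)))[i]? = some true := by
      rw [List.getElem?_map, List.getElem?_range hin]
      simp [hiS]
    rw [← hsnd] at hget
    have := boundary (a := a + 1) (b := b) (c := c) (d := d)
      (d1 := d1) (d2 := d2) (d3 := d3) (i := i) (by simpa using hget)
    omega

end L3proof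

namespace L3proof

lemma step_dead (y : Bool × Bool) : M.step 5 y = 5 := by
  obtain ⟨b, d⟩ := y
  cases b <;> cases d <;> rfl

lemma evalFrom_dead : ∀ x : List (Bool × Bool), M.evalFrom 5 x = 5
  | [] => rfl
  | y :: t => by
      show M.evalFrom (M.step 5 y) t = 5
      rw [step_dead, evalFrom_dead t]

lemma evalFrom_append (s : Fin 6) (x y : List (Bool × Bool)) :
    M.evalFrom s (x ++ y) = M.evalFrom (M.evalFrom s x) y :=
  List.foldl_append

lemma evalFrom_replicate (s : Fin 6) (y : Bool × Bool) (h : M.step s y = s) :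
    ∀ n, M.evalFrom s (List.replicate n y) = s := by
  intro n
  induction n with
  | zero => rfl
  | succ k ih =>
      rw [List.replicate_succ]
      show M.evalFrom (M.step s y) (List.replicate k y) = s
      rw [h, ih]

lemma eval_shape (k : ℕ) (e1 e2 e3 : Bool) :
    M.eval (List.replicate (k+1) FF ++ (true, e1) :: (List.replicate k TF ++ (false, e2) ::
      (List.replicate k FF ++ (true, e3) :: List.replicate k TF))) = 4 := by
  show M.evalFrom 0 _ = 4
  rw [List.replicate_succ, List.cons_append]
  show M.evalFrom (M.step 0 FF) _ = 4
  have s1 : M.step 0 FF = 1 := rfl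
  rw [s1, evalFrom_append, evalFrom_replicate 1 FF rfl]
  show M.evalFrom (M.step 1 (true, e1)) _ = 4
  have s2 : M.step 1 (true, e1) = 2 := by cases e1 <;> rfl
  rw [s2, evalFrom_append, evalFrom_replicate 2 TF rfl]
  show M.evalFrom (M.step 2 (false, e2)) _ = 4
  have s3 : M.step 2 (false, e2) = 3 := by cases e2 <;> rfl
  rw [s3, evalFrom_append, evalFrom_replicate 3 FF rfl]
  show M.evalFrom (M.step 3 (true, e3)) _ = 4
  have s4 : M.step 3 (true, e3) = 4 := by cases e3 <;> rfl
  rw [s4, evalFrom_replicate 4 TF rfl]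

def canonical (m : ℕ) : List Bool :=
  List.replicate m false ++ List.replicate m true ++
    List.replicate m false ++ List.replicate m true

lemma canonical_length (m : ℕ) : (canonical m).length = 4 * m := by
  simp [canonical]; omega

lemma mark_canonical (k : ℕ) (S : Finset ℕ)
    (hS : ∀ i ∈ S, i = (k+1) ∨ i = 2*(k+1) ∨ i = 3*(k+1)) :
    markWord (canonical (k+1)) S =
      List.replicate (k+1) FF ++ (true, decide ((k+1) ∈ S)) :: (List.replicate k TF ++
        (false, decide (2*(k+1) ∈ S)) :: (List.replicate k FF ++
        (true, decide (3*(k+1) ∈ S)) :: List.replicate k TF)) := by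
  have hnot : ∀ (lo len : ℕ), (∀ j, lo ≤ j → j < lo + len →
      j ≠ k+1 ∧ j ≠ 2*(k+1) ∧ j ≠ 3*(k+1)) →
      ∀ j, lo ≤ j → j < lo + len → j ∉ S := by
    intro lo len h j h1 h2 hj
    rcases hS j hj with h' | h' | h' <;> have := h j h1 h2 <;> omega
  rw [markWord_eq_mark, canonical, mark_append, mark_append, mark_append]
  simp only [List.length_append, List.length_replicate, Nat.zero_add]
  rw [mark_replicate S false (k+1) 0 (hnot 0 (k+1) (by intros; omega))]
  rw [show List.replicate (k+1) (true : Bool) = true :: List.replicate k true from rfl]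
  rw [show List.replicate (k+1) (false : Bool) = false :: List.replicate k false from rfl]
  rw [mark, mark, mark]
  rw [mark_replicate S true k (k+1+1) (hnot (k+1+1) k (by intros; omega))]
  rw [mark_replicate S false k (k+1+(k+1)+1) (hnot (k+1+(k+1)+1) k (by intros; omega))]
  rw [mark_replicate S true k (k+1+(k+1)+(k+1)+1) (hnot (k+1+(k+1)+(k+1)+1) k (by intros; omega))]
  have e1 : k+1+(k+1) = 2*(k+1) := by omega
  have e2 : k+1+(k+1)+(k+1) = 3*(k+1) := by omega
  rw [e2, e1]
  simp [List.append_assoc]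

lemma accepts_canonical (k : ℕ) (S : Finset ℕ)
    (hS : ∀ i ∈ S, i = (k+1) ∨ i = 2*(k+1) ∨ i = 3*(k+1)) :
    markWord (canonical (k+1)) S ∈ M.accepts := by
  rw [DFA.mem_accepts, mark_canonical k S hS]
  show M.eval _ ∈ ({4} : Set (Fin 6))
  rw [eval_shape]
  rfl

end L3proof

namespace L3proof

lemma unique4 {a b c d a' b' c' d' : ℕ}
    (h : List.replicate a false ++ true :: (List.replicate b true ++ false ::
          (List.replicate c false ++ true :: List.replicate d true)) =
        List.replicate a' false ++ true :: (List.replicate b' true ++ false ::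
          (List.replicate c' false ++ true :: List.replicate d' true))) :
    a = a' ∧ b = b' ∧ c = c' ∧ d = d' := by
  obtain ⟨ha, h⟩ := peel (by simp) _ _ _ _ h
  obtain ⟨hb, h⟩ := peel (by simp) _ _ _ _ h
  obtain ⟨hc, h⟩ := peel (by simp) _ _ _ _ h
  have hd := congrArg List.length h
  simp only [List.length_replicate] at hd
  exact ⟨ha, hb, hc, hd⟩

lemma decomp_reassoc (a b c d : ℕ) (hb : 0 < b) (hc : 0 < c) (hd : 0 < d) :
    List.replicate a false ++ List.replicate b true ++
      List.replicate c false ++ List.replicate d true =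
    List.replicate a false ++ true :: (List.replicate (b-1) true ++ false ::
      (List.replicate (c-1) false ++ true :: List.replicate (d-1) true)) := by
  obtain ⟨b', rfl⟩ : ∃ b', b = b' + 1 := ⟨b - 1, by omega⟩
  obtain ⟨c', rfl⟩ : ∃ c', c = c' + 1 := ⟨c - 1, by omega⟩
  obtain ⟨d', rfl⟩ : ∃ d', d = d' + 1 := ⟨d - 1, by omega⟩
  simp [List.replicate_succ, List.append_assoc]

lemma pair_lemma {w : List Bool} {m : ℕ} (hm : 0 < m) (hw : w.length = 4 * m)
    {S S' : Finset ℕ}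
    (hA : markWord w S ∈ M.accepts) (hA' : markWord w S' ∈ M.accepts)
    (c1 : m ∈ S ∨ m ∈ S') (c2 : 2*m ∈ S ∨ 2*m ∈ S') (c3 : 3*m ∈ S ∨ 3*m ∈ S') :
    w ∈ L3 := by
  obtain ⟨a, b, c, d, ha0, hb0, hc0, hd0, hdec, hbd⟩ := accepted_structure hA
  obtain ⟨a', b', c', d', ha0', hb0', hc0', hd0', hdec', hbd'⟩ := accepted_structure hA'
  have hww := hdec.symm.trans hdec'
  rw [decomp_reassoc a b c d hb0 hc0 hd0, decomp_reassoc a' b' c' d' hb0' hc0' hd0'] at hww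
  have heq := unique4 hww
  have hlen : a + b + c + d = 4 * m := by
    have := congrArg List.length hdec
    rw [hw] at this
    simp only [List.length_append, List.length_replicate] at this
    omega
  have g1 : m = a ∨ m = a + b ∨ m = a + b + c := by
    rcases c1 with h | h
    · exact hbd m h (by omega)
    · have := hbd' m h (by omega); omega
  have g2 : 2*m = a ∨ 2*m = a + b ∨ 2*m = a + b + c := by
    rcases c2 with h | h
    · exact hbd _ h (by omega)
    · have := hbd' _ h (by omega); omega
  have g3 : 3*m = a ∨ 3*m = a + b ∨ 3*m = a + b + c := by
    rcases c3 with h | h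
    · exact hbd _ h (by omega)
    · have := hbd' _ h (by omega); omega
  obtain ⟨h1, h2, h3, h4⟩ : a = m ∧ b = m ∧ c = m ∧ d = m := by omega
  rw [h1, h2, h3, h4] at hdec
  exact ⟨m, hm, hdec⟩

end L3proof

namespace L3proof

def SS1 (m : ℕ) : Finset ℕ := {m, 2*m}
def SS2 (m : ℕ) : Finset ℕ := {m, 3*m}
def SS3 (m : ℕ) : Finset ℕ := {2*m, 3*m}

noncomputable def tri (m : ℕ) : Finset ℕ →₀ NNReal :=
  Finsupp.single (SS1 m) (1/3) + Finsupp.single (SS2 m) (1/3) + Finsupp.single (SS3 m) (1/3)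

noncomputable def D (n : ℕ) : Finset ℕ →₀ NNReal :=
  if 0 < n ∧ n % 4 = 0 then tri (n / 4)
  else Finsupp.single (if n = 0 then (∅ : Finset ℕ) else {0}) 1

lemma SS_ne {m : ℕ} (hm : 0 < m) : SS1 m ≠ SS2 m ∧ SS1 m ≠ SS3 m ∧ SS2 m ≠ SS3 m := by
  refine ⟨fun h => ?_, fun h => ?_, fun h => ?_⟩
  · have : (2*m : ℕ) ∈ SS2 m := h ▸ (by simp [SS1])
    simp [SS2] at this
    omega
  · have : (m : ℕ) ∈ SS3 m := h ▸ (by simp [SS1])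
    simp [SS3] at this
    omega
  · have : (m : ℕ) ∈ SS3 m := h ▸ (by simp [SS2])
    simp [SS3] at this
    omega

lemma third_ne : (1/3 : NNReal) ≠ 0 := by
  simp

lemma tri_support (m : ℕ) : (tri m).support ⊆ {SS1 m, SS2 m, SS3 m} := by
  intro x hx
  rcases Finset.mem_union.mp (Finsupp.support_add hx) with h | h
  · rcases Finset.mem_union.mp (Finsupp.support_add h) with h' | h'
    · have := Finsupp.support_single_subset h'; simp at this; simp [this]
    · have := Finsupp.support_single_subset h'; simp at this; simp [this]
  · have := Finsupp.support_single_subset h; simp at this; simp [this]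

lemma tri_apply {m : ℕ} (hm : 0 < m) :
    tri m (SS1 m) = 1/3 ∧ tri m (SS2 m) = 1/3 ∧ tri m (SS3 m) = 1/3 := by
  obtain ⟨h12, h13, h23⟩ := SS_ne hm
  refine ⟨?_, ?_, ?_⟩ <;>
    simp [tri, Finsupp.add_apply, Finsupp.single_apply, h12, h13, h23,
      h12.symm, h13.symm, h23.symm]

lemma sum_support_eq (f : Finsupp (Finset ℕ) NNReal) (T : Finset (Finset ℕ))
    (hT : f.support ⊆ T) (g : Finset ℕ → NNReal) (hg : ∀ S, f S = 0 → g S = 0) :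
    ∑ S ∈ f.support, g S = ∑ S ∈ T, g S :=
  Finset.sum_subset hT (fun x _ hx => hg x (Finsupp.notMem_support_iff.mp hx))

lemma sum_three {m : ℕ} (hm : 0 < m) (g : Finset ℕ → NNReal) :
    ∑ S ∈ ({SS1 m, SS2 m, SS3 m} : Finset (Finset ℕ)), g S = g (SS1 m) + g (SS2 m) + g (SS3 m) := by
  obtain ⟨h12, h13, h23⟩ := SS_ne hm
  rw [Finset.sum_insert (by simp [h12, h13]), Finset.sum_insert (by simp [h23]),
    Finset.sum_singleton]
  ring

lemma nn1 : (1/3 + 1/3 + 1/3 : NNReal) = 1 := by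
  rw [← NNReal.coe_inj]; push_cast; norm_num

lemma nn2 : (2/3 : NNReal) ≤ 1/3 + 1/3 := by
  rw [← NNReal.coe_le_coe]; push_cast; norm_num

end L3proof

namespace L3proof

lemma nn3 : (2/3 : NNReal) ≤ 1 := by
  rw [← NNReal.coe_le_coe]; push_cast; norm_num

lemma mem_L3_length {w : List Bool} (hw : w ∈ L3) : 0 < w.length ∧ w.length % 4 = 0 := by
  obtain ⟨m, hm, rfl⟩ := hw
  simp only [List.length_append, List.length_replicate]
  omega

end L3proof


open L3proof in
theorem L3proof.main : RecognizedWithRandomInkdots L3 2 := by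
  refine ⟨Fin 6, inferInstance, M, D, ?_, ?_, ?_⟩
  · -- total mass 1
    intro n
    by_cases h : 0 < n ∧ n % 4 = 0
    · have hm : 0 < n / 4 := by omega
      simp only [D, if_pos h]
      rw [sum_support_eq (tri (n/4)) _ (tri_support (n/4)) _ (fun S h0 => h0),
        sum_three hm, (tri_apply hm).1, (tri_apply hm).2.1, (tri_apply hm).2.2, nn1]
    · simp only [D, if_neg h]
      rw [Finsupp.support_single_ne_zero _ one_ne_zero, Finset.sum_singleton,
        Finsupp.single_eq_same]
  · -- support conditions
    intro n S hS
    by_cases h : 0 < n ∧ n % 4 = 0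
    · simp only [D, if_pos h] at hS
      have hn4 : n = 4 * (n / 4) := by omega
      have := tri_support (n/4) hS
      simp only [Finset.mem_insert, Finset.mem_singleton] at this
      rcases this with rfl | rfl | rfl <;>
        refine ⟨?_, ?_⟩ <;>
          first
          | (intro i hi
             simp only [SS1, SS2, SS3, Finset.mem_insert, Finset.mem_singleton] at hi
             omega)
          | (simp only [SS1, SS2, SS3]
             exact le_trans (Finset.card_insert_le _ _) (by simp))
    · simp only [D, if_neg h] at hS
      rw [Finsupp.support_single_ne_zero _ one_ne_zero, Finset.mem_singleton] at hS
      subst hS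
      by_cases h0 : n = 0
      · simp [h0]
      · simp only [if_neg h0]
        exact ⟨by intro i hi; simp at hi; omega, by simp⟩
  · -- correctness
    intro w
    by_cases h : 0 < w.length ∧ w.length % 4 = 0
    · obtain ⟨m, hm, hn⟩ : ∃ m, 0 < m ∧ w.length = 4 * m := ⟨w.length / 4, by omega, by omega⟩
      have hm4 : w.length / 4 = m := by omega
      constructor
      · -- member
        intro hw
        obtain ⟨m', hm', hww⟩ := hw
        have hlen : w.length = 4 * m' := by
          rw [hww]; simp only [List.length_append, List.length_replicate]; omega
        rw [show m' = m by omega] at hww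
        obtain ⟨k, rfl⟩ : ∃ k, m = k + 1 := ⟨m - 1, by omega⟩
        have hww' : w = canonical (k+1) := hww
        simp only [D, if_pos h, hm4]
        rw [sum_support_eq (tri (k+1)) _ (tri_support (k+1)) _ (fun S h0 => by rw [h0]; simp),
          sum_three hm]
        have hacc1 : markWord w (SS1 (k+1)) ∈ M.accepts := by
          rw [hww']
          exact accepts_canonical k _ (by intro i hi; simp [SS1] at hi; omega)
        have hacc2 : markWord w (SS2 (k+1)) ∈ M.accepts := by
          rw [hww']
          exact accepts_canonical k _ (by intro i hi; simp [SS2] at hi; omega)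
        have hacc3 : markWord w (SS3 (k+1)) ∈ M.accepts := by
          rw [hww']
          exact accepts_canonical k _ (by intro i hi; simp [SS3] at hi; omega)
        rw [if_pos hacc1, if_pos hacc2, if_pos hacc3,
          (tri_apply hm).1, (tri_apply hm).2.1, (tri_apply hm).2.2, nn1]
        exact nn3
      · -- non-member
        intro hw
        simp only [D, if_pos h, hm4]
        rw [sum_support_eq (tri m) _ (tri_support m) _ (fun S h0 => by rw [h0]; simp),
          sum_three hm, (tri_apply hm).1, (tri_apply hm).2.1, (tri_apply hm).2.2]
        have P12 : ¬(markWord w (SS1 m) ∈ M.accepts ∧ markWord w (SS2 m) ∈ M.accepts) :=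
          fun ⟨a1, a2⟩ => hw (pair_lemma hm hn a1 a2
            (Or.inl (by simp [SS1])) (Or.inl (by simp [SS1])) (Or.inr (by simp [SS2])))
        have P13 : ¬(markWord w (SS1 m) ∈ M.accepts ∧ markWord w (SS3 m) ∈ M.accepts) :=
          fun ⟨a1, a2⟩ => hw (pair_lemma hm hn a1 a2
            (Or.inl (by simp [SS1])) (Or.inl (by simp [SS1])) (Or.inr (by simp [SS3])))
        have P23 : ¬(markWord w (SS2 m) ∈ M.accepts ∧ markWord w (SS3 m) ∈ M.accepts) :=
          fun ⟨a1, a2⟩ => hw (pair_lemma hm hn a1 a2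
            (Or.inl (by simp [SS2])) (Or.inr (by simp [SS3])) (Or.inl (by simp [SS2])))
        by_cases hA1 : markWord w (SS1 m) ∈ M.accepts <;>
          by_cases hA2 : markWord w (SS2 m) ∈ M.accepts <;>
          by_cases hA3 : markWord w (SS3 m) ∈ M.accepts
        · exact absurd ⟨hA1, hA2⟩ P12
        · exact absurd ⟨hA1, hA2⟩ P12
        · exact absurd ⟨hA1, hA3⟩ P13
        · rw [if_pos hA1, if_neg hA2, if_neg hA3, ← NNReal.coe_le_coe]
          push_cast; norm_num
        · exact absurd ⟨hA2, hA3⟩ P23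
        · rw [if_neg hA1, if_pos hA2, if_neg hA3, ← NNReal.coe_le_coe]
          push_cast; norm_num
        · rw [if_neg hA1, if_neg hA2, if_pos hA3, ← NNReal.coe_le_coe]
          push_cast; norm_num
        · rw [if_neg hA1, if_neg hA2, if_neg hA3, ← NNReal.coe_le_coe]
          push_cast; norm_num
    · constructor
      · intro hw
        exact absurd (mem_L3_length hw) h
      · intro hw
        simp only [D, if_neg h]
        rw [Finsupp.support_single_ne_zero _ one_ne_zero, Finset.sum_singleton]
        have hacc : markWord w (if w.length = 0 then (∅ : Finset ℕ) else {0}) ∉ M.accepts := by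
          by_cases h0 : w.length = 0
          · have hwnil : w = [] := List.length_eq_zero_iff.mp h0
            subst hwnil
            rw [if_pos h0]
            intro hc
            rw [DFA.mem_accepts] at hc
            have he : M.eval (markWord ([] : List Bool) (∅ : Finset ℕ)) = 0 := by
              simp only [markWord, List.zipIdx_nil, List.map_nil]; rfl
            rw [he] at hc
            simp [M] at hc
          · rw [if_neg h0]
            obtain ⟨b, w', rfl⟩ : ∃ b w', w = b :: w' := by
              cases w with
              | nil => simp at h0
              | cons b w' => exact ⟨b, w', rfl⟩
            intro hc
            rw [DFA.mem_accepts] at hc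
            have hmk : markWord (b :: w') ({0} : Finset ℕ) =
                (b, true) :: mark {0} 1 w' := by
              rw [markWord_eq_mark]; simp [mark]
            rw [hmk] at hc
            have h5 : M.eval ((b, true) :: mark {0} 1 w') = 5 := by
              show M.evalFrom (M.step 0 (b, true)) (mark {0} 1 w') = 5
              rw [show M.step 0 (b, true) = 5 by cases b <;> rfl, evalFrom_dead]
            rw [h5] at hc
            simp [M] at hc
        rw [if_neg hacc, Finsupp.single_eq_same]
        exact nn3

/-- `L_3` is recognized with bounded error using randomized advice
of at most `2` inkdots. -/
theorem L3_mem_randomized_two_inkdots : RecognizedWithRandomInkdots L3 2 := L3proof.main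
end

section
/- Let g : ℕ → ℕ satisfy g(n) ≥ 1 for n ≥ 1, g(n) tends to infinity, and g(n)/n tends to 0. Define L_g over the alphabet {#,0,1} as the set of strings of the form s_1 # s_2 # ⋯ # s_m #^j with m ≥ 1 and j ≥ 1 such that, letting n denote the total length of the string: each subword s_i is of the form 0^* 1 0^* and has length exactly g(n), and, letting p_i denote the (1-based) position of the unique symbol 1 within s_i, |p_i − p_{i−1}| ≤ 1 for all i = 2,…,m. Then L_g is not recognized by any deterministic finite automaton with a t-ary advice track, for any t ≥ 1. -/
/-- `L` is recognized by a deterministic finite automaton with a `t`-ary advice track. -/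
def RecognizedWithAdviceTrack {α : Type*} (L : Set (List α)) (t : ℕ) : Prop :=
  ∃ (σ : Type) (_ : Fintype σ) (M : DFA (α × Fin t) σ) (h : (n : ℕ) → Fin n → Fin t),
    ∀ w : List α, w ∈ L ↔
      (List.ofFn (fun i : Fin w.length => (w.get i, h w.length i))) ∈ M.accepts

/-- The three-letter alphabet `{#, 0, 1}`. -/
inductive TSym : Type
  | hash : TSym
  | zero : TSym
  | one : TSym
  deriving DecidableEq

instance : Fintype TSym where
  elems := {TSym.hash, TSym.zero, TSym.one}
  complete := fun x => by cases x <;> simp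

/-- The language `L_g` over `{#,0,1}`: strings of the form `s_1 # s_2 # ⋯ # s_m #^j`
with `m ≥ 1` and `j ≥ 1` trailing `#`s, where (letting `n` be the total length of the
string) each subword `s_i` has the form `0^(p_i - 1) 1 0^(g n - p_i)` of length exactly
`g n` (so `1 ≤ p_i ≤ g n`, `p_i` being the 1-based position of the unique `1` in `s_i`),
and `|p_i − p_{i−1}| ≤ 1` for `i = 2, …, m`. -/
def Lg (g : ℕ → ℕ) : Set (List TSym) :=
  { w | ∃ (m j : ℕ) (p : ℕ → ℕ), 1 ≤ m ∧ 1 ≤ j ∧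
      (∀ i < m, 1 ≤ p i ∧ p i ≤ g w.length) ∧
      (∀ i, i + 1 < m → p (i + 1) ≤ p i + 1 ∧ p i ≤ p (i + 1) + 1) ∧
      w = (List.ofFn (fun i : Fin m =>
              List.replicate (p i - 1) TSym.zero ++ [TSym.one] ++
              List.replicate (g w.length - p i) TSym.zero ++ [TSym.hash])).flatten ++
          List.replicate (j - 1) TSym.hash }

/-- A block `0^(p-1) 1 0^(G-p) #`. -/
def blk (G p : ℕ) : List TSym :=
  List.replicate (p - 1) TSym.zero ++ [TSym.one] ++
    List.replicate (G - p) TSym.zero ++ [TSym.hash]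

lemma blk_length {G p : ℕ} (h1 : 1 ≤ p) (h2 : p ≤ G) : (blk G p).length = G + 1 := by
  simp [blk]; omega

lemma blk_count_one (G p : ℕ) : (blk G p).count TSym.one = 1 := by
  simp [blk, List.count_append, List.count_replicate, List.count_singleton]

lemma blk_getElem_one {G p : ℕ} (h1 : 1 ≤ p) (h2 : p ≤ G) (hlt : p - 1 < (blk G p).length) :
    (blk G p)[p - 1] = TSym.one := by
  simp only [blk, List.append_assoc, List.getElem_append, List.length_replicate,
    List.length_append, List.length_singleton]
  rw [dif_neg (by omega)]
  simp

lemma blk_getElem_zero {G p i : ℕ} (h1 : 1 ≤ p) (h2 : p ≤ G) (hi : i < p - 1)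
    (hlt : i < (blk G p).length) : (blk G p)[i] = TSym.zero := by
  simp only [blk, List.append_assoc, List.getElem_append, List.length_replicate]
  rw [dif_pos (by omega)]
  simp

lemma blk_inj {G a b : ℕ} (ha1 : 1 ≤ a) (ha2 : a ≤ G) (hb1 : 1 ≤ b) (hb2 : b ≤ G)
    (h : blk G a = blk G b) : a = b := by
  by_contra hne
  wlog hab : a < b generalizing a b
  · exact this hb1 hb2 ha1 ha2 h.symm (Ne.symm hne) (by omega)
  have hlt : a - 1 < (blk G a).length := by rw [blk_length ha1 ha2]; omega
  have h1 := blk_getElem_one ha1 ha2 hlt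
  have hlt' : a - 1 < (blk G b).length := by rw [blk_length hb1 hb2]; omega
  have h2 := blk_getElem_zero hb1 hb2 (by omega) hlt'
  rw [List.getElem_of_eq h hlt] at h1
  rw [h2] at h1
  exact TSym.noConfusion h1

/-- The two-block test word. -/
def W (G a b r : ℕ) : List TSym :=
  blk G a ++ blk G b ++ List.replicate r TSym.hash

lemma W_length {G a b r : ℕ} (ha1 : 1 ≤ a) (ha2 : a ≤ G) (hb1 : 1 ≤ b) (hb2 : b ≤ G) :
    (W G a b r).length = 2 * (G + 1) + r := by
  simp [W, blk_length ha1 ha2, blk_length hb1 hb2]; ring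

lemma W_count_one {G a b r : ℕ} : (W G a b r).count TSym.one = 2 := by
  simp [W, List.count_append, blk_count_one, List.count_replicate]

lemma W_mem {g : ℕ → ℕ} {G b r : ℕ} (hb1 : 1 ≤ b) (hb2 : b ≤ G)
    (hG : g ((W G b b r).length) = G) : W G b b r ∈ Lg g := by
  refine ⟨2, r + 1, fun _ => b, by omega, by omega, fun i _ => ⟨hb1, by rw [hG]; exact hb2⟩,
    fun i hi => ⟨by simp, by simp⟩, ?_⟩
  rw [hG]
  simp [W, blk, List.ofFn_succ, List.append_assoc]

lemma W_parse {g : ℕ → ℕ} {G a b r : ℕ} (ha1 : 1 ≤ a) (ha2 : a ≤ G)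
    (hb1 : 1 ≤ b) (hb2 : b ≤ G) (hG : g ((W G a b r).length) = G)
    (hmem : W G a b r ∈ Lg g) : b ≤ a + 1 ∧ a ≤ b + 1 := by
  obtain ⟨m, j, q, hm, hj, hbd, hadj, heq⟩ := hmem
  rw [hG] at hbd heq
  have hblk : ∀ i : Fin m, (List.replicate (q i - 1) TSym.zero ++ [TSym.one] ++
      List.replicate (G - q i) TSym.zero ++ [TSym.hash]) = blk G (q i) := fun i => rfl
  simp only [hblk] at heq
  have hcnt : (W G a b r).count TSym.one = m := by
    rw [heq]
    simp [List.count_append, List.count_flatten, List.map_ofFn, List.count_replicate,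
      Function.comp_def, blk_count_one, List.sum_ofFn]
  have hm2 : m = 2 := by rw [W_count_one] at hcnt; omega
  subst hm2
  simp only [List.ofFn_succ, List.flatten, Fin.isValue] at heq
  have heq' : blk G a ++ (blk G b ++ List.replicate r TSym.hash) =
      blk G (q 0) ++ (blk G (q 1) ++ List.replicate (j - 1) TSym.hash) := by
    simpa [W, List.append_assoc] using heq
  have hq0 := (hbd 0 (by omega))
  have hq1 := (hbd 1 (by omega))
  obtain ⟨e1, e2⟩ := List.append_inj heq'
    (by rw [blk_length ha1 ha2, blk_length hq0.1 hq0.2])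
  obtain ⟨e3, _⟩ := List.append_inj e2
    (by rw [blk_length hb1 hb2, blk_length hq1.1 hq1.2])
  have ea := blk_inj ha1 ha2 hq0.1 hq0.2 e1
  have eb := blk_inj hb1 hb2 hq1.1 hq1.2 e3
  have := hadj 0 (by omega)
  simp only [zero_add] at this
  omega

lemma ofFn_pair_eq_zip {α β : Type*} (u : List α) (f : Fin u.length → β) :
    List.ofFn (fun i => (u.get i, f i)) = u.zip (List.ofFn f) := by
  apply List.ext_getElem
  · simp
  · intro i h1 h2
    simp [List.getElem_zip, List.getElem_ofFn]

open Filter in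
/-- for `g ∈ ω(1) ∩ o(n)` with `g(n) ≥ 1` for `n ≥ 1`, the language
`L_g` is not recognized by any dfa with a `t`-ary advice track, for any `t ≥ 1`. -/
theorem Lg_not_mem_advice_track (g : ℕ → ℕ)
    (hg0 : ∀ n, 1 ≤ n → 1 ≤ g n)
    (hg1 : Tendsto g atTop atTop)
    (hg2 : Tendsto (fun n => (g n : ℝ) / n) atTop (nhds 0))
    (t : ℕ) (ht : 1 ≤ t) :
    ¬ RecognizedWithAdviceTrack (Lg g) t := by
  rintro ⟨σ, iF, M, h, hM⟩
  set s := Fintype.card σ with hs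
  obtain ⟨n, ⟨hn1, hn2⟩, hn9⟩ :=
    (((hg1.eventually_ge_atTop (2 * s + 3)).and
      (hg2.eventually_lt_const (by norm_num : (0:ℝ) < 1/3))).and
      (eventually_ge_atTop 9)).exists
  set G := g n with hGdef
  -- `3 * G < n`
  have hnpos : (0:ℝ) < (n:ℝ) := by exact_mod_cast Nat.lt_of_lt_of_le (by norm_num) hn9
  have h3G : 3 * G < n := by
    have : (G:ℝ) < 1/3 * n := (div_lt_iff₀ hnpos).mp hn2
    have : (3 * G : ℝ) < n := by linarith
    exact_mod_cast this
  have hGbig : 2 * s + 3 ≤ G := hn1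
  have hbig : 2 * (G + 1) + 1 ≤ n := by omega
  set r := n - 2 * (G + 1) with hrdef
  have hr1 : 1 ≤ r := by omega
  have hlen : ∀ a b, 1 ≤ a → a ≤ G → 1 ≤ b → b ≤ G → (W G a b r).length = n := by
    intro a b ha1 ha2 hb1 hb2
    rw [W_length ha1 ha2 hb1 hb2]; omega
  set adv : List (Fin t) := List.ofFn (h n) with hadv
  have hadvlen : adv.length = n := by simp [hadv]
  -- acceptance criterion for our test words
  have key : ∀ a b, 1 ≤ a → a ≤ G → 1 ≤ b → b ≤ G →
      (W G a b r ∈ Lg g ↔ M.evalFrom M.start ((W G a b r).zip adv) ∈ M.accept) := by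
    intro a b ha1 ha2 hb1 hb2
    rw [hM (W G a b r), ofFn_pair_eq_zip, hlen a b ha1 ha2 hb1 hb2, DFA.mem_accepts]
    rfl
  -- evaluation splits after the first block
  have hsplit : ∀ a b, 1 ≤ a → a ≤ G → 1 ≤ b → b ≤ G →
      (W G a b r).zip adv = (blk G a).zip (adv.take (G + 1)) ++
        (blk G b ++ List.replicate r TSym.hash).zip (adv.drop (G + 1)) := by
    intro a b ha1 ha2 hb1 hb2
    conv_lhs => rw [show W G a b r = blk G a ++ (blk G b ++ List.replicate r TSym.hash) by
      simp [W, List.append_assoc], ← List.take_append_drop (G + 1) adv]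
    rw [List.zip_append]
    rw [blk_length ha1 ha2, List.length_take, hadvlen]
    omega
  -- pigeonhole on the states after the first block
  have hcard : Fintype.card σ < Fintype.card (Fin (s + 1)) := by simp [hs]
  obtain ⟨k, k', hkk', hF⟩ := Fintype.exists_ne_map_eq_of_card_lt
    (fun k : Fin (s + 1) => M.evalFrom M.start ((blk G (2 * (k : ℕ) + 1)).zip (adv.take (G + 1))))
    hcard
  have hk : 2 * (k : ℕ) + 1 ≤ G := by have := k.isLt; omega
  have hk' : 2 * (k' : ℕ) + 1 ≤ G := by have := k'.isLt; omega
  set a := 2 * (k : ℕ) + 1 with hadef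
  set b := 2 * (k' : ℕ) + 1 with hbdef
  have ha1 : 1 ≤ a := by omega
  have hb1 : 1 ≤ b := by omega
  -- `W G b b r ∈ Lg g`
  have hmem : W G b b r ∈ Lg g := W_mem hb1 hk' (by rw [hlen b b hb1 hk' hb1 hk'])
  -- transfer acceptance from `W G b b r` to `W G a b r`
  have hacc : M.evalFrom M.start ((W G b b r).zip adv) ∈ M.accept :=
    (key b b hb1 hk' hb1 hk').mp hmem
  rw [hsplit b b hb1 hk' hb1 hk', DFA.evalFrom_of_append, ← hF, ← DFA.evalFrom_of_append,
    ← hsplit a b ha1 hk hb1 hk'] at hacc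
  have hmem' : W G a b r ∈ Lg g := (key a b ha1 hk hb1 hk').mpr hacc
  have hpar := W_parse ha1 hk hb1 hk' (by rw [hlen a b ha1 hk hb1 hk']) hmem'
  have hvne : (k : ℕ) ≠ (k' : ℕ) := fun hv => hkk' (Fin.ext hv)
  omega
end
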